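/- arXiv:1710.06968 — 11 statements merged into one kernel-verified Lean document; each statement's English description precedes it below -/
import Mathlib

section
/- Let δ: G → W be a function from a groupoid G to a Coxeter group W satisfying (WG1) (δ of every identity edge is 1) and (WG2') (the local triangle inequality). Then for any edge g ∈ G with δ(g) ∈ S, we have δ(g⁻¹) = δ(g). -/
open CategoryTheory List

variable {B : Type*} {W : Type*} [Group W] {M : CoxeterMatrix B}
variable {G : Type*} [Groupoid G]

/-- The Bruhat order on a Coxeter group, defined via the subword property:
`v ≤ w` iff some reduced word for `w` has a sublist with product `v`. -/
def BruhatLE (cs : CoxeterSystem M W) (v w : W) : Prop :=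
  ∃ ω : List B, cs.IsReduced ω ∧ cs.wordProd ω = w ∧
    ∃ ω' : List B, ω'.Sublist ω ∧ cs.wordProd ω' = v

/-- (WG1): `δ` of every identity edge is `1`. -/
def WG1 (δ : ∀ ⦃x y : G⦄, (x ⟶ y) → W) : Prop :=
  ∀ x : G, δ (𝟙 x) = 1

/-- (WG2): the triangle inequality `δ(gh) ≥ δ(g)δ(h)` in the Bruhat order. -/
def WG2 (cs : CoxeterSystem M W) (δ : ∀ ⦃x y : G⦄, (x ⟶ y) → W) : Prop :=
  ∀ ⦃x y z : G⦄ (g : x ⟶ y) (h : y ⟶ z), BruhatLE cs (δ g * δ h) (δ (g ≫ h))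

/-- (WG2'): the local triangle inequality. -/
def WG2' (cs : CoxeterSystem M W) (δ : ∀ ⦃x y : G⦄, (x ⟶ y) → W) : Prop :=
  ∀ ⦃x y z : G⦄ (g : x ⟶ y) (h : x ⟶ z) (i : B), δ (Groupoid.inv g ≫ h) = cs.simple i →
    (cs.IsRightDescent (δ g) i → δ h = δ g ∨ δ h = δ g * cs.simple i) ∧
    (¬ cs.IsRightDescent (δ g) i → δ h = δ g * cs.simple i)

/-- (WG3): the geodesic extension property. -/
def WG3 (cs : CoxeterSystem M W) (δ : ∀ ⦃x y : G⦄, (x ⟶ y) → W) : Prop :=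
  ∀ ⦃x y : G⦄ (g : x ⟶ y) (i : B), cs.IsRightDescent (δ g) i →
    ∃ (z : G) (h : x ⟶ z), δ (Groupoid.inv h ≫ g) = cs.simple i ∧ δ h = δ g * cs.simple i

/-- `δ` is weak: from every chamber there issues an edge of each simple length. -/
def WeakFn (cs : CoxeterSystem M W) (δ : ∀ ⦃x y : G⦄, (x ⟶ y) → W) : Prop :=
  ∀ (x : G) (i : B), ∃ (y : G) (g : x ⟶ y), δ g = cs.simple i

/-- The list of `W`-lengths of the edges of a path (a potential gallery). -/
def pathWord (δ : ∀ ⦃x y : G⦄, (x ⟶ y) → W) : ∀ {x y : G}, Quiver.Path x y → List W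
  | _, _, Quiver.Path.nil => []
  | _, _, Quiver.Path.cons p e => pathWord δ p ++ [δ e]

/-- If `δ` satisfies (WG1) and (WG2'), then `δ(g⁻¹) = δ(g)` for every edge `g`
whose `W`-length is a simple reflection. -/
theorem stmt0 (cs : CoxeterSystem M W) (δ : ∀ ⦃x y : G⦄, (x ⟶ y) → W)
    (h1 : WG1 δ) (h2 : WG2' cs δ)
    ⦃x y : G⦄ (g : x ⟶ y) (i : B) (hg : δ g = cs.simple i) :
    δ (Groupoid.inv g) = δ g := by
  have key := h2 (Groupoid.inv g) (𝟙 y) i (by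
    simp only [Groupoid.inv_eq_inv, IsIso.inv_inv, Category.comp_id]
    exact hg)
  by_cases hd : cs.IsRightDescent (δ (Groupoid.inv g)) i
  · rcases key.1 hd with h | h
    · exfalso
      rw [h1 y] at h
      rw [← h] at hd
      exact cs.not_isRightDescent_one i hd
    · rw [h1 y] at h
      rw [hg]
      have := congrArg (· * cs.simple i) h
      simpa [mul_assoc] using this.symm
  · have h := key.2 hd
    rw [h1 y] at h
    rw [hg]
    have := congrArg (· * cs.simple i) h
    simpa [mul_assoc] using this.symm
end

section
/- Let δ: G → W satisfy (WG1) and (WG2). Let g, h ∈ G be composable edges with δ(g), δ(h) ∈ S. If δ(g) = δ(h) = s, then δ(gh) ∈ {1, s}. -/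
open CategoryTheory List

variable {B : Type*} {W : Type*} [Group W] {M : CoxeterMatrix B}
variable {G : Type*} [Groupoid G]

private lemma bruhatLE_simple_cases {W : Type*} [Group W] {B : Type*} {M : CoxeterMatrix B}
    (cs : CoxeterSystem M W) {v : W} (i : B) (hv : BruhatLE cs v (cs.simple i)) :
    v = 1 ∨ v = cs.simple i := by
  obtain ⟨ω, hred, hprod, ω', hsub, hprod'⟩ := hv
  have hlen : ω.length = 1 := by
    have := hred
    unfold CoxeterSystem.IsReduced at this
    rw [hprod, cs.length_simple] at this
    omega
  obtain ⟨j, hj⟩ : ∃ j, ω = [j] := by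
    match ω, hlen with
    | [j], _ => exact ⟨j, rfl⟩
  subst hj
  rcases List.sublist_singleton.mp hsub with h' | h'
  · left; simp [h'] at hprod'; exact hprod'.symm
  · right; rw [h'] at hprod'; rw [← hprod', hprod]

private lemma bruhatLE_one_cases {W : Type*} [Group W] {B : Type*} {M : CoxeterMatrix B}
    (cs : CoxeterSystem M W) {v : W} (hv : BruhatLE cs v 1) : v = 1 := by
  obtain ⟨ω, hred, hprod, ω', hsub, hprod'⟩ := hv
  have hlen : ω.length = 0 := by
    have := hred
    unfold CoxeterSystem.IsReduced at this
    rw [hprod, cs.length_one] at this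
    omega
  have : ω = [] := List.length_eq_zero_iff.mp hlen
  subst this
  have : ω' = [] := List.sublist_nil.mp hsub
  subst this
  simpa using hprod'.symm

/-- If `δ` satisfies (WG1) and (WG2), and `g`, `h` are composable edges with
`δ(g) = δ(h) = s` a simple reflection, then `δ(gh) ∈ {1, s}`. -/
theorem stmt3 (cs : CoxeterSystem M W) (δ : ∀ ⦃x y : G⦄, (x ⟶ y) → W)
    (h1 : WG1 δ) (h2 : WG2 cs δ) ⦃x y z : G⦄ (g : x ⟶ y) (h : y ⟶ z) (i : B)
    (hg : δ g = cs.simple i) (hh : δ h = cs.simple i) :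
    δ (g ≫ h) = 1 ∨ δ (g ≫ h) = cs.simple i := by
  have hinv : δ (Groupoid.inv h) = cs.simple i := by
    have h3 := h2 h (Groupoid.inv h)
    rw [Groupoid.comp_inv, h1 y, hh] at h3
    have := bruhatLE_one_cases cs h3
    have : δ (Groupoid.inv h) = (cs.simple i)⁻¹ := eq_inv_of_mul_eq_one_right this
    rwa [cs.inv_simple] at this
  have h4 := h2 (g ≫ h) (Groupoid.inv h)
  rw [Category.assoc, Groupoid.comp_inv, Category.comp_id, hg, hinv] at h4
  rcases bruhatLE_simple_cases cs i h4 with h' | h'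
  · right
    have := congrArg (· * cs.simple i) h'
    simpa [mul_assoc, cs.simple_mul_simple_self] using this
  · left
    have := congrArg (· * cs.simple i) h'
    simpa [mul_assoc, cs.simple_mul_simple_self] using this
end

section
/- Let δ: G → W satisfy (WG1) and (WG2). Let g, h ∈ G be composable edges with δ(g) = s and δ(h) = t, where s, t ∈ S and s ≠ t. Then δ(gh) = st. -/
open CategoryTheory List

variable {B : Type*} {W : Type*} [Group W] {M : CoxeterMatrix B}
variable {G : Type*} [Groupoid G]

lemma bruhat_le_one_aux (cs : CoxeterSystem M W) {v : W} (hv : BruhatLE cs v 1) : v = 1 := by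
  obtain ⟨ω, hred, hω, ω', hsub, hv⟩ := hv
  have hlen : ω.length = 0 := by
    have := hred
    rw [CoxeterSystem.IsReduced, hω, cs.length_one] at this
    omega
  rw [List.length_eq_zero_iff] at hlen
  subst hlen
  have := List.sublist_nil.mp hsub
  subst this
  simp [CoxeterSystem.wordProd_nil] at hv
  exact hv.symm

lemma bruhat_le_simple_aux (cs : CoxeterSystem M W) {v : W} {i : B}
    (hv : BruhatLE cs v (cs.simple i)) : v = 1 ∨ v = cs.simple i := by
  obtain ⟨ω, hred, hω, ω', hsub, hv⟩ := hv
  have hlen : ω.length = 1 := by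
    have := hred
    rw [CoxeterSystem.IsReduced, hω, cs.length_simple] at this
    omega
  obtain ⟨b, hb⟩ := List.length_eq_one_iff.mp hlen
  subst hb
  rcases List.sublist_singleton.mp hsub with h0 | h0 <;> subst h0
  · left; simpa [CoxeterSystem.wordProd_nil] using hv.symm
  · right; rw [← hv, hω]

lemma not_bruhat_ij_le_simple (cs : CoxeterSystem M W) {i j : B} {k : B}
    (hne : cs.simple i ≠ cs.simple j)
    (hv : BruhatLE cs (cs.simple i * cs.simple j) (cs.simple k)) : False := by
  obtain ⟨ω, hred, hω, ω', hsub, hv⟩ := hv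
  have hlen : ω.length = 1 := by
    have := hred
    rw [CoxeterSystem.IsReduced, hω, cs.length_simple] at this
    omega
  have hle : ω'.length ≤ 1 := hlen ▸ hsub.length_le
  have h2 : cs.length (cs.simple i * cs.simple j) ≤ 1 := by
    calc cs.length (cs.simple i * cs.simple j) = cs.length (cs.wordProd ω') := by rw [hv]
    _ ≤ ω'.length := cs.length_wordProd_le ω'
    _ ≤ 1 := hle
  have hpar := cs.length_mul_mod_two (cs.simple i) (cs.simple j)
  rw [cs.length_simple, cs.length_simple] at hpar
  have h0 : cs.length (cs.simple i * cs.simple j) = 0 := by omega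
  rw [cs.length_eq_zero_iff] at h0
  exact hne (by rw [← cs.inv_simple j]; exact eq_inv_of_mul_eq_one_left h0)

/-- If `δ` satisfies (WG1) and (WG2), and `g`, `h` are composable edges with
`δ(g) = s`, `δ(h) = t` distinct simple reflections, then `δ(gh) = st`. -/
theorem stmt4 (cs : CoxeterSystem M W) (δ : ∀ ⦃x y : G⦄, (x ⟶ y) → W)
    (h1 : WG1 δ) (h2 : WG2 cs δ) ⦃x y z : G⦄ (g : x ⟶ y) (h : y ⟶ z) (i j : B)
    (hg : δ g = cs.simple i) (hh : δ h = cs.simple j) (hne : cs.simple i ≠ cs.simple j) :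
    δ (g ≫ h) = cs.simple i * cs.simple j := by
  -- δ(inv h) = simple j
  have hinv : δ (Groupoid.inv h) = cs.simple j := by
    have := h2 h (Groupoid.inv h)
    rw [Groupoid.comp_inv, h1] at this
    have h1' := bruhat_le_one_aux cs this
    rw [hh] at h1'
    have h2' := mul_eq_one_iff_inv_eq.mp h1'
    rw [← h2', cs.inv_simple]
  -- u * sj ≤ si
  have key := h2 (g ≫ h) (Groupoid.inv h)
  have hcomp : (g ≫ h) ≫ Groupoid.inv h = g := by
    rw [Category.assoc, Groupoid.comp_inv, Category.comp_id]
  rw [hcomp, hg, hinv] at key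
  rcases bruhat_le_simple_aux cs key with h0 | h0
  · -- δ(g≫h) = sj, contradicts st ≤ sj
    have hu : δ (g ≫ h) = cs.simple j := by
      have := mul_eq_one_iff_eq_inv.mp h0
      rw [cs.inv_simple] at this
      exact this
    have := h2 g h
    rw [hg, hh, hu] at this
    exact absurd this (fun hc => not_bruhat_ij_le_simple cs hne hc)
  · -- δ(g≫h) * sj = si
    have hu : δ (g ≫ h) = cs.simple i * (cs.simple j)⁻¹ := eq_mul_inv_of_mul_eq h0
    rw [cs.inv_simple] at hu
    exact hu
end

section
/- Let δ: G → W be a function satisfying (WG1) and (WG2). Then δ satisfies the local triangle inequality (WG2'): for all edges g, h with g⁻¹h defined and δ(g⁻¹h) = s ∈ S, putting w = δ(g), if ws < w then δ(h) ∈ {w, ws}, and if ws > w then δ(h) = ws. -/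
open CategoryTheory List

variable {B : Type*} {W : Type*} [Group W] {M : CoxeterMatrix B}
variable {G : Type*} [Groupoid G]

namespace StmtAux

open CoxeterSystem

open scoped Classical

variable {B : Type*} {W : Type*} [Group W] {M : CoxeterMatrix B}

/-- Elementwise 2-torsion abelian group used as a parity invariant. -/
abbrev PA (W : Type*) := W → Multiplicative (ZMod 2)

lemma z2_mul_self : ∀ z : Multiplicative (ZMod 2), z * z = 1 := by decide

omit [Group W] in
lemma pa_mul_self (a : PA W) : a * a = 1 := funext fun x => z2_mul_self (a x)

/-- Indicator function of `t`. -/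
noncomputable def ind (t : W) : PA W := fun x => if x = t then Multiplicative.ofAdd 1 else 1

/-- Conjugation action of `W` on `PA W`. -/
def conjPA (u : W) : PA W ≃* PA W where
  toFun f := fun x => f (u⁻¹ * x * u)
  invFun f := fun x => f (u * x * u⁻¹)
  left_inv f := funext fun x => by group
  right_inv f := funext fun x => by group
  map_mul' f g := rfl

def phiA : W →* MulAut (PA W) where
  toFun := conjPA
  map_one' := by
    refine MulEquiv.ext fun f => funext fun x => ?_
    simp [conjPA]
  map_mul' u v := by
    refine MulEquiv.ext fun f => funext fun x => ?_
    simp [conjPA, MulAut.mul_apply, mul_assoc]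

lemma phiA_apply (u : W) (f : PA W) (x : W) : phiA u f x = f (u⁻¹ * x * u) := rfl

lemma phiA_ind (u t : W) : phiA u (ind t) = ind (u * t * u⁻¹) := by
  funext x
  show (if u⁻¹ * x * u = t then (Multiplicative.ofAdd 1 : Multiplicative (ZMod 2)) else 1)
      = (if x = u * t * u⁻¹ then Multiplicative.ofAdd 1 else 1)
  have h : (u⁻¹ * x * u = t) = (x = u * t * u⁻¹) := by
    apply propext
    constructor
    · intro h; rw [← h]; group
    · intro h; rw [h]; group
  rw [h]

abbrev HH (W : Type*) [Group W] := SemidirectProduct (PA W) W phiA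

variable (cs : CoxeterSystem M W)

/-- The generators of the parity representation. -/
noncomputable def fE : B → HH W := fun i => ⟨ind (cs.simple i), cs.simple i⟩

lemma listProd_fE (ω : List B) :
    (ω.map (fE cs)).prod = ⟨((cs.leftInvSeq ω).map ind).prod, cs.wordProd ω⟩ := by
  induction ω with
  | nil => ext <;> simp
  | cons i ω ih =>
      rw [List.map_cons, List.prod_cons, ih]
      show (⟨ind (cs.simple i), cs.simple i⟩ *
        (⟨((cs.leftInvSeq ω).map ind).prod, cs.wordProd ω⟩ : HH W) : HH W) = _
      rw [SemidirectProduct.mul_def, CoxeterSystem.leftInvSeq]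
      refine SemidirectProduct.ext ?_ ?_ <;> dsimp only
      · rw [map_list_prod (phiA (cs.simple i)), List.map_map, List.map_cons,
          List.prod_cons, List.map_map]
        have hmaps : List.map (⇑(phiA (cs.simple i)) ∘ ind) (cs.leftInvSeq ω)
            = List.map (ind ∘ ⇑(MulAut.conj (cs.simple i))) (cs.leftInvSeq ω) := by
          refine List.map_congr_left fun t _ => ?_
          show phiA (cs.simple i) (ind t) = ind (MulAut.conj (cs.simple i) t)
          rw [phiA_ind]
          simp [MulAut.conj_apply]
        rw [hmaps]
      · rw [cs.wordProd_cons]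


lemma altWord_two_mul_succ (i i' : B) (m : ℕ) :
    alternatingWord i i' (2 * (m + 1)) = i :: i' :: alternatingWord i i' (2 * m) := by
  have h1 : 2 * (m + 1) = (2 * m + 1) + 1 := by ring
  rw [h1, alternatingWord_succ', alternatingWord_succ']
  simp [Nat.even_add_one, Nat.not_even_iff_odd]

omit [Group W] in
lemma conj_conj_pow {W : Type*} [Group W] (a b : W) (j : ℕ) :
    a * (b * ((a * b) ^ j * a) * b) * a = (a * b) ^ (j + 2) * a := by
  induction j with
  | zero => rw [pow_two]; simp [mul_assoc]
  | succ j ih =>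
      have h1 : (a * b) ^ (j + 1) = (a * b) * (a * b) ^ j := by rw [pow_succ']
      have h2 : (a * b) ^ (j + 1 + 2) = (a * b) * (a * b) ^ (j + 2) := by rw [pow_succ']
      rw [h1]
      calc a * (b * (a * b * (a * b) ^ j * a) * b) * a
          = (a * b) * (a * (b * ((a * b) ^ j * a) * b) * a) := by
            simp [mul_assoc]
        _ = (a * b) * ((a * b) ^ (j + 2) * a) := by rw [ih]
        _ = (a * b) ^ (j + 1 + 2) * a := by rw [h2]; simp [mul_assoc]
      

lemma lis_altWord (i i' : B) (m : ℕ) :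
    cs.leftInvSeq (alternatingWord i i' (2 * m)) =
      (List.range (2 * m)).map
        (fun j => (cs.simple i * cs.simple i') ^ j * cs.simple i) := by
  induction m with
  | zero => simp [alternatingWord]
  | succ m ih =>
      rw [altWord_two_mul_succ, CoxeterSystem.leftInvSeq, CoxeterSystem.leftInvSeq, ih,
        List.map_map]
      have h2 : 2 * (m + 1) = 2 * m + 1 + 1 := by ring
      rw [h2]
      simp only [List.range_succ_eq_map, List.map_cons, List.map_map]
      refine congrArg₂ List.cons ?_ (congrArg₂ List.cons ?_ ?_)
      · simp
      · simp [MulAut.conj_apply, cs.inv_simple]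
      · refine List.map_congr_left fun j _ => ?_
        simp only [Function.comp_apply, MulAut.conj_apply, cs.inv_simple]
        exact conj_conj_pow (cs.simple i) (cs.simple i') j

lemma prod_fE_altWord (i i' : B) (m : ℕ) :
    ((alternatingWord i i' (2 * m)).map (fE cs)).prod = (fE cs i * fE cs i') ^ m := by
  induction m with
  | zero => simp [alternatingWord]
  | succ m ih =>
      rw [altWord_two_mul_succ, List.map_cons, List.map_cons, List.prod_cons, List.prod_cons,
        ih, pow_succ', mul_assoc]

lemma liftable : M.IsLiftable (fE cs) := by
  intro i i'
  rw [← prod_fE_altWord, listProd_fE]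
  have hπ : cs.wordProd (alternatingWord i i' (2 * M i i')) = 1 := by
    rw [prod_alternatingWord_eq_mul_pow]
    have h2 : 2 * M i i' / 2 = M i i' := by omega
    simp [h2, cs.simple_mul_simple_pow i i']
  have hA : (((cs.leftInvSeq (alternatingWord i i' (2 * M i i'))).map ind)).prod = 1 := by
    rw [lis_altWord]
    have h3 : 2 * M i i' = M i i' + M i i' := by ring
    have hFF : List.map (fun j => (cs.simple i * cs.simple i') ^ j * cs.simple i)
        (List.map (fun j => M i i' + j) (List.range (M i i')))
        = List.map (fun j => (cs.simple i * cs.simple i') ^ j * cs.simple i)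
          (List.range (M i i')) := by
      rw [List.map_map]
      refine List.map_congr_left fun j _ => ?_
      simp only [Function.comp_apply, pow_add, cs.simple_mul_simple_pow i i', one_mul]
    rw [h3, List.range_add, List.map_append, hFF, List.map_append, List.prod_append]
    exact pa_mul_self _
  rw [hπ, hA]
  rfl

/-- The parity representation of `W`. -/
noncomputable def phi : W →* HH W := cs.lift ⟨fE cs, liftable cs⟩

lemma phi_simple (i : B) : phi cs (cs.simple i) = fE cs i :=
  cs.lift_apply_simple (liftable cs) i

lemma phi_wordProd (ω : List B) :
    phi cs (cs.wordProd ω) = ⟨((cs.leftInvSeq ω).map ind).prod, cs.wordProd ω⟩ := by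
  have h : phi cs (cs.wordProd ω) = (ω.map (fE cs)).prod := by
    induction ω with
    | nil => simp
    | cons i ω ih =>
        rw [cs.wordProd_cons, map_mul, ih, phi_simple, List.map_cons, List.prod_cons]
  rw [h, listProd_fE]

lemma phi_right (w : W) : (phi cs w).right = w := by
  obtain ⟨ω, rfl⟩ := cs.wordProd_surjective w
  rw [phi_wordProd]

omit [Group W] in
lemma eval_prod (l : List (PA W)) (x : W) : l.prod x = (l.map (fun f => f x)).prod := by
  induction l with
  | nil => rfl
  | cons a l ih => rw [List.prod_cons, List.map_cons, List.prod_cons, Pi.mul_apply, ih]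

lemma phi_left_eq_one_of_not_mem (ω : List B) (t : W) (h : t ∉ cs.leftInvSeq ω) :
    (phi cs (cs.wordProd ω)).left t = 1 := by
  rw [phi_wordProd]
  show ((cs.leftInvSeq ω).map ind).prod t = 1
  rw [eval_prod]
  refine List.prod_eq_one fun z hz => ?_
  simp only [List.mem_map] at hz
  obtain ⟨a, ha, rfl⟩ := hz
  obtain ⟨u, hu, rfl⟩ := ha
  show (if t = u then Multiplicative.ofAdd 1 else 1) = 1
  rw [if_neg]
  rintro rfl
  exact h hu

lemma phi_left_reflection (t : W) (ht : cs.IsReflection t) :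
    (phi cs t).left t = Multiplicative.ofAdd 1 := by
  obtain ⟨v, i, rfl⟩ := ht
  have hmul : phi cs (v * cs.simple i * v⁻¹)
      = phi cs v * phi cs (cs.simple i) * (phi cs v)⁻¹ := by
    rw [← map_mul, ← map_inv, ← map_mul]
  rw [hmul, phi_simple, SemidirectProduct.mul_left, SemidirectProduct.mul_left,
    SemidirectProduct.mul_right, SemidirectProduct.inv_left, phi_right]
  dsimp only [fE]
  rw [Pi.mul_apply, Pi.mul_apply, phiA_ind]
  have hcomp : (phiA (v * cs.simple i)) ((phiA v⁻¹) ((phi cs v).left)⁻¹)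
      = phiA (v * cs.simple i * v⁻¹) ((phi cs v).left)⁻¹ := by
    funext x
    rw [phiA_apply, phiA_apply, phiA_apply]
    congr 1
    group
  rw [hcomp]
  have h1 : ind (v * cs.simple i * v⁻¹) (v * cs.simple i * v⁻¹) = Multiplicative.ofAdd 1 := by
    show (if _ = _ then _ else _) = _
    rw [if_pos rfl]
  have h2 : (phiA (v * cs.simple i * v⁻¹) ((phi cs v).left)⁻¹) (v * cs.simple i * v⁻¹)
      = ((phi cs v).left (v * cs.simple i * v⁻¹))⁻¹ := by
    rw [phiA_apply]
    have h3 : (v * cs.simple i * v⁻¹)⁻¹ * (v * cs.simple i * v⁻¹) * (v * cs.simple i * v⁻¹)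
        = v * cs.simple i * v⁻¹ := by group
    rw [h3, Pi.inv_apply]
  rw [h1, h2, mul_comm _ (Multiplicative.ofAdd 1), mul_assoc, mul_inv_cancel, mul_one]

lemma strong_exchange_left {t w : W} (ht : cs.IsReflection t)
    (hlt : cs.length (t * w) < cs.length w) {ω : List B} (hred : cs.IsReduced ω)
    (hπ : cs.wordProd ω = w) : t ∈ cs.leftInvSeq ω := by
  by_contra hmem
  have h0 : (phi cs w).left t = 1 := hπ ▸ phi_left_eq_one_of_not_mem cs ω t hmem
  have h1 : (phi cs (t * w)).left t = Multiplicative.ofAdd 1 := by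
    rw [map_mul, SemidirectProduct.mul_left, Pi.mul_apply, phi_left_reflection cs t ht,
      phi_right, phiA_apply]
    have h2 : t⁻¹ * t * t = t := by group
    rw [h2, h0, mul_one]
  obtain ⟨τ, hτred, hτπ⟩ := cs.exists_reduced_word' (t * w)
  have hmem' : t ∈ cs.leftInvSeq τ := by
    by_contra hmem'
    have h4 := phi_left_eq_one_of_not_mem cs τ t hmem'
    rw [hτπ] at h1
    rw [h1] at h4
    exact absurd h4 (by decide)
  have hinv := cs.isLeftInversion_of_mem_leftInvSeq hτred hmem'
  rw [← hτπ] at hinv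
  have h3 : t * (t * w) = w := by
    rw [← mul_assoc, ht.mul_self, one_mul]
  have h5 := hinv.2
  rw [h3] at h5
  exact absurd hlt (by omega)

lemma strong_exchange_right {t w : W} (ht : cs.IsReflection t)
    (hlt : cs.length (w * t) < cs.length w) {ω : List B} (hred : cs.IsReduced ω)
    (hπ : cs.wordProd ω = w) : t ∈ cs.rightInvSeq ω := by
  have h1 : cs.length (t * w⁻¹) < cs.length w⁻¹ := by
    have : t * w⁻¹ = (w * t)⁻¹ := by rw [mul_inv_rev, ht.inv]
    rw [this, cs.length_inv, cs.length_inv]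
    exact hlt
  have h2 : cs.wordProd ω.reverse = w⁻¹ := by rw [cs.wordProd_reverse, hπ]
  have h3 : cs.IsReduced ω.reverse := (cs.isReduced_reverse_iff ω).mpr hred
  have h4 := strong_exchange_left cs ht h1 h3 h2
  rw [cs.leftInvSeq_reverse, List.mem_reverse] at h4
  exact h4

end StmtAux


namespace StmtAux

open CoxeterSystem

variable {B : Type*} {W : Type*} [Group W] {M : CoxeterMatrix B}
variable (cs : CoxeterSystem M W)

lemma bruhatLE_length_le {v w : W} (h : BruhatLE cs v w) : cs.length v ≤ cs.length w := by
  obtain ⟨ω, hred, hπ, ω', hsub, hπ'⟩ := h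
  calc cs.length v = cs.length (cs.wordProd ω') := by rw [hπ']
    _ ≤ ω'.length := cs.length_wordProd_le ω'
    _ ≤ ω.length := hsub.length_le
    _ = cs.length w := by rw [← hred, hπ]

lemma bruhatLE_eq_of_length_ge {v w : W} (h : BruhatLE cs v w)
    (hlen : cs.length w ≤ cs.length v) : v = w := by
  obtain ⟨ω, hred, hπ, ω', hsub, hπ'⟩ := h
  have h1 : ω.length ≤ ω'.length := by
    calc ω.length = cs.length (cs.wordProd ω) := hred.symm
      _ = cs.length w := by rw [hπ]
      _ ≤ cs.length v := hlen
      _ = cs.length (cs.wordProd ω') := by rw [hπ']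
      _ ≤ ω'.length := cs.length_wordProd_le ω'
  have h2 : ω' = ω := hsub.eq_of_length_le h1
  rw [← hπ, ← hπ', h2]

lemma bruhatLE_eq_one {v : W} (h : BruhatLE cs v 1) : v = 1 :=
  bruhatLE_eq_of_length_ge cs h (by simp)

lemma sublist_eraseIdx {α : Type*} {l' l : List α} (h : l'.Sublist l)
    (hlen : l'.length + 1 = l.length) : ∃ j < l.length, l' = l.eraseIdx j := by
  induction h with
  | slnil => omega
  | @cons l₁ l₂ a h ih =>
      refine ⟨0, by simp, ?_⟩
      simp only [List.eraseIdx_cons_zero]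
      exact h.eq_of_length (by simpa using hlen)
  | @cons_cons l₁ l₂ a h ih =>
      obtain ⟨j, hj, rfl⟩ := ih (by simpa using hlen)
      exact ⟨j + 1, by simpa using hj, by simp [List.eraseIdx_cons_succ]⟩

/-- The key geometric fact, a consequence of the strong exchange property: if `i` is a right
descent of `w`, and `u` has the same length as `w` with `u * s i ≤ w` a coatom, then `u = w`. -/
lemma coatom_eq {w u : W} {i : B} (hd : cs.IsRightDescent w i)
    (hle : BruhatLE cs (u * cs.simple i) w)
    (hlen_u : cs.length u = cs.length w)
    (hlen_us : cs.length (u * cs.simple i) + 1 = cs.length w) : u = w := by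
  obtain ⟨ω, hred, hπ, ω', hsub, hπ'⟩ := hle
  have hlω : ω.length = cs.length w := by rw [← hred, hπ]
  have hlω'₁ : cs.length w ≤ ω'.length + 1 := by
    have := cs.length_wordProd_le ω'
    rw [hπ'] at this
    omega
  have hlω'₂ : ω'.length ≤ ω.length := hsub.length_le
  rcases Nat.lt_or_ge ω'.length ω.length with hlt | hge
  · -- one letter was deleted
    have hlen' : ω'.length + 1 = ω.length := by omega
    obtain ⟨j, hj, rfl⟩ := sublist_eraseIdx hsub hlen'
    set t := (cs.rightInvSeq ω).getD j 1 with htdef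
    have hwt : w * t = u * cs.simple i := by
      rw [← hπ, cs.wordProd_mul_getD_rightInvSeq, hπ']
    have htmem : t ∈ cs.rightInvSeq ω := by
      rw [htdef, List.getD_eq_getElem _ _ (by simpa using hj)]
      exact List.getElem_mem _
    have htrefl : cs.IsReflection t := cs.isReflection_of_mem_rightInvSeq ω htmem
    have hlt_wt : cs.length (w * t) < cs.length w := by rw [hwt]; omega
    -- a reduced word for `w` ending in `i`
    obtain ⟨τ, hτred, hτπ⟩ := cs.exists_reduced_word' (w * cs.simple i)
    have hlτ : τ.length = cs.length (w * cs.simple i) := by rw [← hτred, ← hτπ]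
    have hws : cs.length (w * cs.simple i) + 1 = cs.length w := by
      rcases cs.length_mul_simple w i with h | h
      · exact absurd hd (by unfold CoxeterSystem.IsRightDescent; omega)
      · exact h
    have hΩπ : cs.wordProd (τ ++ [i]) = w := by
      rw [cs.wordProd_append, ← hτπ, cs.wordProd_singleton,
        cs.simple_mul_simple_cancel_right]
    have hΩred : cs.IsReduced (τ ++ [i]) := by
      unfold CoxeterSystem.IsReduced
      rw [hΩπ, List.length_append, List.length_singleton]
      omega
    have htmem' : t ∈ cs.rightInvSeq (τ ++ [i]) :=
      strong_exchange_right cs htrefl hlt_wt hΩred hΩπ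
    obtain ⟨j', hj', ht'⟩ := List.mem_iff_getElem.mp htmem'
    rw [cs.length_rightInvSeq, List.length_append, List.length_singleton] at hj'
    have herase : cs.wordProd ((τ ++ [i]).eraseIdx j') = u * cs.simple i := by
      rw [← cs.wordProd_mul_getD_rightInvSeq, hΩπ,
        List.getD_eq_getElem _ _ (by rw [cs.length_rightInvSeq, List.length_append]; simpa using hj'),
        ht', hwt]
    rcases Nat.lt_or_ge j' τ.length with hj'lt | hj'ge
    · -- deletion inside τ : contradiction with the length of u
      exfalso
      rw [List.eraseIdx_append_of_lt_length hj'lt [i], cs.wordProd_append,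
        cs.wordProd_singleton] at herase
      have hu : cs.wordProd (τ.eraseIdx j') = u := mul_right_cancel herase
      have : cs.length u ≤ (τ.eraseIdx j').length := by
        rw [← hu]; exact cs.length_wordProd_le _
      have hl := List.length_eraseIdx_add_one hj'lt
      omega
    · -- the deleted letter is the final `i`, so `u * s i = w * s i`
      have hj'eq : j' = τ.length := by omega
      have herase2 : (τ ++ [i]).eraseIdx j' = τ := by
        rw [hj'eq, List.eraseIdx_append_of_length_le (le_refl _) [i], Nat.sub_self,
          List.eraseIdx_cons_zero, List.append_nil]
      rw [herase2, ← hτπ] at herase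
      exact mul_right_cancel herase.symm
  · -- no deletion : u * s i = w, contradicting lengths
    exfalso
    have : ω' = ω := hsub.eq_of_length_le hge
    rw [this, hπ] at hπ'
    rw [← hπ'] at hlen_us
    omega

end StmtAux

/-- If `δ` satisfies (WG1) and (WG2), then `δ` satisfies the local triangle
inequality (WG2'). -/
theorem stmt5 (cs : CoxeterSystem M W) (δ : ∀ ⦃x y : G⦄, (x ⟶ y) → W)
    (h1 : WG1 δ) (h2 : WG2 cs δ) :
    WG2' cs δ := by
  intro x y z g h i hδ
  have hinv : ∀ ⦃p q : G⦄ (e : p ⟶ q), δ (Groupoid.inv e) = (δ e)⁻¹ := by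
    intro p q e
    have h0 := h2 e (Groupoid.inv e)
    rw [Groupoid.comp_inv, h1 p] at h0
    exact (inv_eq_of_mul_eq_one_right (StmtAux.bruhatLE_eq_one cs h0)).symm
  have hb1 : BruhatLE cs (δ g * cs.simple i) (δ h) := by
    have h3 := h2 g (Groupoid.inv g ≫ h)
    rw [hδ] at h3
    have h4 : g ≫ (Groupoid.inv g ≫ h) = h := by
      rw [← Category.assoc, Groupoid.comp_inv, Category.id_comp]
    rwa [h4] at h3
  have hb2 : BruhatLE cs (δ h * cs.simple i) (δ g) := by
    have h3 := h2 h (Groupoid.inv (Groupoid.inv g ≫ h))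
    rw [hinv, hδ, cs.inv_simple] at h3
    have h4 : h ≫ Groupoid.inv (Groupoid.inv g ≫ h) = g := by
      simp [Groupoid.inv_eq_inv]
    rwa [h4] at h3
  have hl1 := StmtAux.bruhatLE_length_le cs hb1
  have hl2 := StmtAux.bruhatLE_length_le cs hb2
  constructor
  · intro hd
    have hd' : cs.length (δ g * cs.simple i) < cs.length (δ g) := hd
    have hws : cs.length (δ g * cs.simple i) + 1 = cs.length (δ g) := by
      rcases cs.length_mul_simple (δ g) i with hh | hh
      · omega
      · exact hh
    rcases cs.length_mul_simple (δ h) i with hh | hh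
    · right
      exact (StmtAux.bruhatLE_eq_of_length_ge cs hb1 (by omega)).symm
    · have hcase : cs.length (δ h) + 1 = cs.length (δ g) ∨
          cs.length (δ h) = cs.length (δ g) ∨
          cs.length (δ h) = cs.length (δ g) + 1 := by omega
      rcases hcase with hc | hc | hc
      · right
        exact (StmtAux.bruhatLE_eq_of_length_ge cs hb1 (by omega)).symm
      · left
        exact StmtAux.coatom_eq cs hd hb2 hc (by omega)
      · exfalso
        have h5 : δ h * cs.simple i = δ g :=
          StmtAux.bruhatLE_eq_of_length_ge cs hb2 (by omega)
        have h6 : δ h = δ g * cs.simple i := by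
          rw [← h5, cs.simple_mul_simple_cancel_right]
        have h7 := congrArg cs.length h6
        omega
  · intro hnd
    have hws : cs.length (δ g * cs.simple i) = cs.length (δ g) + 1 := by
      rcases cs.length_mul_simple (δ g) i with hh | hh
      · exact hh
      · exact absurd (show cs.IsRightDescent (δ g) i from by
          show cs.length (δ g * cs.simple i) < cs.length (δ g); omega) hnd
    rcases cs.length_mul_simple (δ h) i with hh | hh
    · exact absurd hl2 (by omega)
    · exact (StmtAux.bruhatLE_eq_of_length_ge cs hb1 (by omega)).symm
end

section
/- Let δ: G → W satisfy (WG2') and (WG3), and let g = g₁⋯gₙ be a geodesic of an edge g ∈ G (a factorization into edges each of W-length in S whose type δ(g₁)⋯δ(gₙ) is a reduced word in W). Then δ(g) = δ(g₁)⋯δ(gₙ). -/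
open CategoryTheory List

variable {B : Type*} {W : Type*} [Group W] {M : CoxeterMatrix B}
variable {G : Type*} [Groupoid G]

private lemma stmt6_aux (cs : CoxeterSystem M W) (δ : ∀ ⦃x y : G⦄, (x ⟶ y) → W)
    (h2 : WG2' cs δ) : ∀ {x y : G} (p : Quiver.Path x y) (ω : List B),
    pathWord δ p = ω.map cs.simple → cs.IsReduced ω → ω ≠ [] →
    δ (composePath p) = cs.wordProd ω := by
  intro x y p
  induction p with
  | nil =>
    intro ω hω _ hne
    simp [pathWord] at hω
    exact absurd (by simpa using hω.symm) hne
  | cons q e ih =>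
    rename_i z y'
    intro ω hω hred hne
    -- decompose ω = ω' ++ [i]
    obtain ⟨ω', i, rfl⟩ : ∃ ω' i, ω = ω' ++ [i] := by
      rcases List.eq_nil_or_concat ω with h | ⟨ω', i, h⟩
      · exact absurd h hne
      · exact ⟨ω', i, by simpa [List.concat_eq_append] using h⟩
    rw [List.map_append] at hω
    simp only [pathWord] at hω
    have hlen : (pathWord δ q).length = (ω'.map cs.simple).length := by
      have := congrArg List.length hω; simpa using this
    obtain ⟨hq, he⟩ := List.append_inj hω hlen
    have he' : δ e = cs.simple i := by simpa using he
    rcases eq_or_ne ω' [] with h0 | h0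
    · subst h0
      cases q with
      | nil =>
        simp only [composePath, Category.id_comp]
        simp [he']
      | cons q' e' => simp [pathWord] at hq
    · have hq' : δ (composePath q) = cs.wordProd ω' := by
        apply ih _ hq _ h0
        · unfold CoxeterSystem.IsReduced at hred ⊢
          have h1 := cs.length_wordProd_le ω'
          have h2' : cs.wordProd (ω' ++ [i]) = cs.wordProd ω' * cs.simple i := by
            rw [cs.wordProd_append]; simp
          have h3 := cs.length_mul_le (cs.wordProd ω') (cs.simple i)
          rw [cs.length_simple] at h3
          rw [h2'] at hred
          simp at hred
          omega
      have hdelta : δ (Groupoid.inv (composePath q) ≫ (composePath q ≫ e)) = cs.simple i := by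
        rw [← Category.assoc, Groupoid.inv_comp, Category.id_comp, he']
      have hnd : ¬ cs.IsRightDescent (δ (composePath q)) i := by
        intro hd
        unfold CoxeterSystem.IsRightDescent at hd
        rw [hq'] at hd
        have h1 := cs.length_wordProd_le ω'
        have h2' : cs.wordProd ω' * cs.simple i = cs.wordProd (ω' ++ [i]) := by
          rw [cs.wordProd_append]; simp
        rw [h2', hred] at hd
        simp at hd
        omega
      have := (h2 (composePath q) (composePath q ≫ e) i hdelta).2 hnd
      simp only [composePath]
      rw [this, hq', cs.wordProd_append]
      simp

/-- If `δ` satisfies (WG2') and (WG3) and `g = g₁⋯gₙ` is a geodesic of an edge `g`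
(a nonempty factorization into edges whose types form a reduced word `ω`), then
`δ(g) = δ(g₁)⋯δ(gₙ)`. -/
theorem stmt6 (cs : CoxeterSystem M W) (δ : ∀ ⦃x y : G⦄, (x ⟶ y) → W)
    (h2 : WG2' cs δ) (h3 : WG3 cs δ) ⦃x y : G⦄ (g : x ⟶ y)
    (p : Quiver.Path x y) (hp : composePath p = g)
    (ω : List B) (hω : pathWord δ p = ω.map cs.simple)
    (hred : cs.IsReduced ω) (hne : ω ≠ []) :
    δ g = (pathWord δ p).prod := by
  subst hp
  rw [stmt6_aux cs δ h2 p ω hω hred hne, hω]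
  rfl
end

section
/- Let δ: G → W be a function satisfying (WG3). Let g ∈ G be an edge with δ(g) = w. Then for every reduced decomposition w = s₁⋯sₙ, there exists a geodesic g = g₁⋯gₙ of g with type s₁⋯sₙ, i.e., δ(gᵢ) = sᵢ for all i. -/
open CategoryTheory List

variable {B : Type*} {W : Type*} [Group W] {M : CoxeterMatrix B}
variable {G : Type*} [Groupoid G]

/-- If `δ` satisfies (WG3), `g` is an edge with `δ(g) = w`, and `ω` is a nonempty
reduced decomposition of `w`, then there is a geodesic of `g` of type `ω`. -/
theorem stmt7 (cs : CoxeterSystem M W) (δ : ∀ ⦃x y : G⦄, (x ⟶ y) → W)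
    (h3 : WG3 cs δ) ⦃x y : G⦄ (g : x ⟶ y)
    (ω : List B) (hred : cs.IsReduced ω) (hw : cs.wordProd ω = δ g) (hne : ω ≠ []) :
    ∃ p : Quiver.Path x y, composePath p = g ∧ pathWord δ p = ω.map cs.simple := by
  induction ω using List.reverseRecOn generalizing x y g with
  | nil => exact absurd rfl hne
  | append_singleton ω' i ih =>
    rcases eq_or_ne ω' [] with rfl | hne'
    · refine ⟨(Quiver.Path.nil).cons g, by simp, ?_⟩
      simp only [pathWord, List.nil_append, List.map]
      rw [← hw]; simp
    · have key : δ g * cs.simple i = cs.wordProd ω' := by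
        rw [← hw, cs.wordProd_append, cs.wordProd_singleton, mul_assoc,
          cs.simple_mul_simple_self, mul_one]
      have hdesc : cs.IsRightDescent (δ g) i := by
        unfold CoxeterSystem.IsRightDescent
        rw [key, ← hw]
        calc cs.length (cs.wordProd ω') ≤ ω'.length := cs.length_wordProd_le ω'
          _ < (ω' ++ [i]).length := by simp
          _ = cs.length (cs.wordProd (ω' ++ [i])) := hred.symm
      obtain ⟨z, h, he, hh⟩ := h3 g i hdesc
      have hω' : cs.wordProd ω' = δ h := by rw [hh, key]
      have hred' : cs.IsReduced ω' := by
        have := CoxeterSystem.IsReduced.take hred ω'.length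
        simpa using this
      obtain ⟨p', hp', hpw'⟩ := ih h hred' hω' hne'
      refine ⟨p'.cons (Groupoid.inv h ≫ g), ?_, ?_⟩
      · rw [composePath]; rw [hp']; simp
      · simp only [pathWord]
        rw [hpw', he, List.map_append, List.map_singleton]
end

section
/- Let δ: G → W satisfy (WG1), (WG2'), and (WG3). Then for any edge g ∈ G, δ(g⁻¹) = δ(g)⁻¹. -/
open CategoryTheory List

variable {B : Type*} {W : Type*} [Group W] {M : CoxeterMatrix B}
variable {G : Type*} [Groupoid G]

private lemma ginv_inv {x y : G} (g : x ⟶ y) :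
    Groupoid.inv (Groupoid.inv g) = g := by
  simp [Groupoid.inv_eq_inv]

/-- From WG2': if the connecting edge `inv a ≫ b` has simple length `sᵢ` and `i` is not a
right descent of `δ b`, then `δ a = δ b * sᵢ`. -/
private lemma wg2'_force (cs : CoxeterSystem M W) (δ : ∀ ⦃x y : G⦄, (x ⟶ y) → W)
    (h2 : WG2' cs δ) {x y z : G} (a : x ⟶ y) (b : x ⟶ z) (i : B)
    (hc : δ (Groupoid.inv a ≫ b) = cs.simple i)
    (hnd : ¬ cs.IsRightDescent (δ b) i) :
    δ a = δ b * cs.simple i := by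
  obtain ⟨d1, d2⟩ := h2 a b i hc
  by_cases hd : cs.IsRightDescent (δ a) i
  · rcases d1 hd with h | h
    · rw [← h] at hd; exact absurd hd hnd
    · rw [h, CoxeterSystem.simple_mul_simple_cancel_right]
  · rw [d2 hd, CoxeterSystem.simple_mul_simple_cancel_right]

/-- The chain-forcing lemma: if `p` satisfies the invariants
`δ(g ≫ p) = (δ (inv g))⁻¹ * δ p` and `ℓ((δ (inv g))⁻¹ * δ p) + ℓ(δ p) ≤ ℓ(δ (inv g))`, with
`ℓ(δ p) = n ≥ 1`, then `δ g = (δ (inv g))⁻¹`. -/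
private lemma chain_force (cs : CoxeterSystem M W) (δ : ∀ ⦃x y : G⦄, (x ⟶ y) → W)
    (h2 : WG2' cs δ) (h3 : WG3 cs δ) :
    ∀ (n : ℕ) {x y z : G} (g : x ⟶ y) (p : y ⟶ z), 1 ≤ n → cs.length (δ p) = n →
      δ (g ≫ p) = (δ (Groupoid.inv g))⁻¹ * δ p →
      cs.length ((δ (Groupoid.inv g))⁻¹ * δ p) + n ≤ cs.length (δ (Groupoid.inv g)) →
      δ g = (δ (Groupoid.inv g))⁻¹ := by
  intro n
  induction n with
  | zero => intro x y z g p hn; omega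
  | succ m ih =>
    intro x y z g p _ hlen hA hinvariant
    rcases Nat.eq_zero_or_pos m with hm | hm
    · -- base case: `δ p` is a simple reflection `s j`
      subst hm
      obtain ⟨j, hj⟩ := cs.length_eq_one_iff.mp hlen
      -- `j` is not a right descent of `δ (g ≫ p)`
      have hnd : ¬ cs.IsRightDescent (δ (g ≫ p)) j := by
        intro hd
        rw [cs.isRightDescent_iff, hA] at hd
        have he : ((δ (Groupoid.inv g))⁻¹ * δ p) * cs.simple j = (δ (Groupoid.inv g))⁻¹ := by
          rw [hj, mul_assoc, cs.simple_mul_simple_self, mul_one]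
        rw [he, cs.length_inv] at hd
        omega
      have hconn : δ (Groupoid.inv g ≫ (g ≫ p)) = cs.simple j := by
        rw [← Category.assoc, Groupoid.inv_comp, Category.id_comp, hj]
      have := wg2'_force cs δ h2 g (g ≫ p) j hconn hnd
      rw [this, hA, hj, mul_assoc, cs.simple_mul_simple_self, mul_one]
    · -- inductive step: peel one letter off `δ p` using WG3
      have hne : δ p ≠ 1 := by
        intro h; rw [h, cs.length_one] at hlen; omega
      obtain ⟨i, hdesc⟩ := cs.exists_rightDescent_of_ne_one hne
      obtain ⟨z', h, hc, hh⟩ := h3 p i hdesc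
      have hlenh : cs.length (δ h) = m := by
        have := cs.isRightDescent_iff.mp hdesc
        rw [hh]; omega
      -- `i` is not a right descent of `δ (g ≫ p)`
      have hnd : ¬ cs.IsRightDescent (δ (g ≫ p)) i := by
        intro hd
        rw [cs.isRightDescent_iff] at hd
        have he : (δ (Groupoid.inv g))⁻¹ = (δ (g ≫ p) * cs.simple i) * (δ h)⁻¹ := by
          rw [hA, hh]; group
        have hAA := congrArg cs.length hA
        have hlb : cs.length (δ (Groupoid.inv g)) ≤
            cs.length (δ (g ≫ p) * cs.simple i) + m := by
          calc cs.length (δ (Groupoid.inv g)) = cs.length ((δ (Groupoid.inv g))⁻¹) :=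
                (cs.length_inv _).symm
            _ ≤ cs.length (δ (g ≫ p) * cs.simple i) + cs.length ((δ h)⁻¹) := by
                rw [he]; exact cs.length_mul_le _ _
            _ = cs.length (δ (g ≫ p) * cs.simple i) + m := by rw [cs.length_inv, hlenh]
        omega
      -- connecting edge between `g ≫ h` and `g ≫ p`
      have hconn : δ (Groupoid.inv (g ≫ h) ≫ (g ≫ p)) = cs.simple i := by
        have : Groupoid.inv (g ≫ h) ≫ (g ≫ p) = Groupoid.inv h ≫ p := by
          simp [Groupoid.inv_eq_inv]
        rw [this, hc]
      have hgh : δ (g ≫ h) = (δ (Groupoid.inv g))⁻¹ * δ h := by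
        rw [wg2'_force cs δ h2 (g ≫ h) (g ≫ p) i hconn hnd, hA, hh, mul_assoc]
      -- new invariant
      have hinv' : cs.length ((δ (Groupoid.inv g))⁻¹ * δ h) + m ≤
          cs.length (δ (Groupoid.inv g)) := by
        have hle : cs.length ((δ (Groupoid.inv g))⁻¹ * δ h) ≤
            cs.length ((δ (Groupoid.inv g))⁻¹ * δ p) + 1 := by
          have : (δ (Groupoid.inv g))⁻¹ * δ h =
              ((δ (Groupoid.inv g))⁻¹ * δ p) * cs.simple i := by
            rw [hh, mul_assoc]
          rw [this]
          have := cs.length_mul_le ((δ (Groupoid.inv g))⁻¹ * δ p) (cs.simple i)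
          rw [cs.length_simple] at this
          exact this
        omega
      exact ih g h hm hlenh hgh hinv'

/-- For any edge `g` with `δ (inv g) ≠ 1`, we have `δ g = (δ (inv g))⁻¹`. -/
private lemma main_force (cs : CoxeterSystem M W) (δ : ∀ ⦃x y : G⦄, (x ⟶ y) → W)
    (h1 : WG1 δ) (h2 : WG2' cs δ) (h3 : WG3 cs δ) {x y : G} (g : x ⟶ y)
    (hv : δ (Groupoid.inv g) ≠ 1) : δ g = (δ (Groupoid.inv g))⁻¹ := by
  have hpos : 1 ≤ cs.length (δ (Groupoid.inv g)) := by
    rcases Nat.eq_zero_or_pos (cs.length (δ (Groupoid.inv g))) with h | h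
    · exact absurd (cs.length_eq_zero_iff.mp h) hv
    · exact h
  apply chain_force cs δ h2 h3 (cs.length (δ (Groupoid.inv g))) g (Groupoid.inv g) hpos rfl
  · rw [Groupoid.comp_inv, h1, inv_mul_cancel]
  · rw [inv_mul_cancel, cs.length_one]; omega

/-- If `δ` satisfies (WG1), (WG2'), and (WG3), then `δ(g⁻¹) = δ(g)⁻¹` for every edge. -/
theorem stmt8 (cs : CoxeterSystem M W) (δ : ∀ ⦃x y : G⦄, (x ⟶ y) → W)
    (h1 : WG1 δ) (h2 : WG2' cs δ) (h3 : WG3 cs δ) ⦃x y : G⦄ (g : x ⟶ y) :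
    δ (Groupoid.inv g) = (δ g)⁻¹ := by
  by_cases hg : δ g = 1
  · by_cases hv : δ (Groupoid.inv g) = 1
    · rw [hg, hv, inv_one]
    · have := main_force cs δ h1 h2 h3 g hv
      rw [hg] at this
      exact absurd (by rw [← inv_inv (δ (Groupoid.inv g)), ← this, inv_one]) hv
  · have hne : δ (Groupoid.inv (Groupoid.inv g)) ≠ 1 := by rw [ginv_inv]; exact hg
    have := main_force cs δ h1 h2 h3 (Groupoid.inv g) hne
    rw [ginv_inv] at this
    exact this
end

section
/- Let δ: G → W satisfy (WG1), (WG2'), and (WG3). Then δ satisfies (WG2): for all composable edges g, h, δ(gh) ≥ δ(g)δ(h) in the Bruhat order. -/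
open CategoryTheory List

variable {B : Type*} {W : Type*} [Group W] {M : CoxeterMatrix B}
variable {G : Type*} [Groupoid G]

namespace Stmt9Aux

open CoxeterSystem

variable {B : Type*} {W : Type*} [Group W] {M : CoxeterMatrix B} (cs : CoxeterSystem M W)

lemma z2_add_self (x : ZMod 2) : x + x = 0 := by revert x; decide

lemma z2_cases (x : ZMod 2) : x = 0 ∨ x = 1 := by revert x; decide

lemma z2_eq_of_add_eq_zero {x y : ZMod 2} (h : x + y = 0) : x = y := by revert h; revert x y; decide

lemma z2_cancel {x : ZMod 2} (h : (1 : ZMod 2) = x + 1) : x = 0 := by revert h; revert x; decide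

lemma z2_cancel' {x : ZMod 2} (h : (0 : ZMod 2) = 1 + x) : x = 1 := by revert h; revert x; decide

open Classical in
/-- Indicator function with values in `ZMod 2`. -/
noncomputable def ind (a b : W) : ZMod 2 := if a = b then 1 else 0

lemma ind_congr {a b c d : W} (h : (a = b) ↔ (c = d)) : ind a b = ind c d := by
  unfold ind
  by_cases hab : a = b
  · rw [if_pos hab, if_pos (h.mp hab)]
  · rw [if_neg hab, if_neg (fun hc => hab (h.mpr hc))]

lemma ind_eq_one {a b : W} (h : a = b) : ind a b = 1 := by unfold ind; rw [if_pos h]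

lemma ind_eq_zero {a b : W} (h : a ≠ b) : ind a b = 0 := by unfold ind; rw [if_neg h]

lemma ind_self (a : W) : ind a a = 1 := ind_eq_one rfl

/-- The underlying function of the permutation associated to a simple reflection. -/
noncomputable def etaFun (i : B) : W × ZMod 2 → W × ZMod 2 :=
  fun p => (cs.simple i * p.1 * cs.simple i, p.2 + ind p.1 (cs.simple i))

lemma simple_conj_cancel (i : B) (a : W) :
    cs.simple i * (cs.simple i * a * cs.simple i) * cs.simple i = a := by
  have h1 : cs.simple i * (cs.simple i * a * cs.simple i) * cs.simple i
      = (cs.simple i * cs.simple i) * a * (cs.simple i * cs.simple i) := by group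
  rw [h1, cs.simple_mul_simple_self, one_mul, mul_one]

lemma simple_conj_iff (i : B) (a : W) :
    (cs.simple i * a * cs.simple i = cs.simple i) ↔ (a = cs.simple i) := by
  constructor
  · intro h
    have := congrArg (fun x => cs.simple i * x * cs.simple i) h
    rw [simple_conj_cancel] at this
    rw [this]
    have h2 : cs.simple i * cs.simple i * cs.simple i = cs.simple i := by
      rw [cs.simple_mul_simple_self, one_mul]
    exact h2.symm ▸ rfl
  · intro h
    rw [h, cs.simple_mul_simple_self, one_mul]

lemma etaFun_invol (i : B) : Function.Involutive (etaFun cs i) := by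
  intro p
  unfold etaFun
  dsimp only
  refine Prod.ext ?_ ?_
  · exact simple_conj_cancel cs i p.1
  · show p.2 + ind p.1 (cs.simple i) + ind (cs.simple i * p.1 * cs.simple i) (cs.simple i) = p.2
    rw [ind_congr (simple_conj_iff cs i p.1), add_assoc, z2_add_self, add_zero]

/-- The permutation of `W × ZMod 2` associated to a simple reflection. -/
noncomputable def etaPerm (i : B) : Equiv.Perm (W × ZMod 2) := (etaFun_invol cs i).toPerm

lemma etaPerm_apply (i : B) (p : W × ZMod 2) : etaPerm cs i p = etaFun cs i p := rfl

lemma conj_eq_iff (u a b : W) : (u * a * u⁻¹ = b) ↔ (a = u⁻¹ * b * u) := by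
  constructor
  · intro h; rw [← h]; group
  · intro h; rw [h]; group

lemma p_comm (i j : B) :
    (cs.simple i * cs.simple j)⁻¹ * cs.simple j = cs.simple j * (cs.simple i * cs.simple j) := by
  rw [mul_inv_rev, cs.inv_simple, cs.inv_simple, mul_assoc]

lemma gen_conj_pow {q t : W} (hq : q⁻¹ * t = t * q) (k : ℕ) :
    (q ^ k)⁻¹ * t * q ^ k = t * q ^ (2 * k) := by
  induction k with
  | zero => simp
  | succ k ih =>
    have e1 : 2 * (k + 1) = (2 * k + 1) + 1 := by ring
    calc (q ^ (k+1))⁻¹ * t * q ^ (k+1)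
        = q⁻¹ * ((q ^ k)⁻¹ * t * q ^ k) * q := by rw [pow_succ, mul_inv_rev]; group
      _ = q⁻¹ * (t * q ^ (2*k)) * q := by rw [ih]
      _ = (q⁻¹ * t) * q ^ (2*k) * q := by group
      _ = t * (q * q ^ (2*k) * q) := by rw [hq]; group
      _ = t * q ^ (2*(k+1)) := by rw [e1, pow_succ, pow_succ']

lemma gen_conj_pow' {q t : W} (hq : q⁻¹ * t = t * q) (k : ℕ) :
    (q ^ k)⁻¹ * (q⁻¹ * t) * q ^ k = t * q ^ (2 * k + 1) := by
  calc (q ^ k)⁻¹ * (q⁻¹ * t) * q ^ k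
      = ((q ^ (k+1))⁻¹ * t * q ^ (k+1)) * q⁻¹ := by rw [pow_succ, mul_inv_rev]; group
    _ = t * q ^ (2*(k+1)) * q⁻¹ := by rw [gen_conj_pow hq]
    _ = t * q ^ (2*k+1) := by
        have e1 : 2 * (k + 1) = (2 * k + 1) + 1 := by ring
        rw [e1, pow_succ]; group

lemma conj_pow (i j : B) (k : ℕ) :
    ((cs.simple i * cs.simple j) ^ k)⁻¹ * cs.simple j * (cs.simple i * cs.simple j) ^ k
      = cs.simple j * (cs.simple i * cs.simple j) ^ (2 * k) :=
  gen_conj_pow (p_comm cs i j) k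

lemma conj_pow' (i j : B) (k : ℕ) :
    ((cs.simple i * cs.simple j) ^ k)⁻¹ * (cs.simple j * cs.simple i * cs.simple j)
        * (cs.simple i * cs.simple j) ^ k
      = cs.simple j * (cs.simple i * cs.simple j) ^ (2 * k + 1) := by
  have h0 : cs.simple j * cs.simple i * cs.simple j
      = (cs.simple i * cs.simple j)⁻¹ * cs.simple j := by
    rw [mul_inv_rev, cs.inv_simple, cs.inv_simple]
  rw [h0]
  exact gen_conj_pow' (p_comm cs i j) k

lemma pair_sum (f : ℕ → ZMod 2) (n : ℕ) :
    ∑ k ∈ Finset.range n, (f (2*k) + f (2*k+1)) = ∑ r ∈ Finset.range (2*n), f r := by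
  induction n with
  | zero => simp
  | succ n ih =>
    have e1 : 2 * (n+1) = (2*n+1)+1 := by ring
    rw [Finset.sum_range_succ, ih, e1, Finset.sum_range_succ, Finset.sum_range_succ, add_assoc]

lemma FF_pow (i j : B) (n : ℕ) (w : W) (ε : ZMod 2) :
    ((etaPerm cs i * etaPerm cs j) ^ n) (w, ε) =
      ((cs.simple i * cs.simple j) ^ n * w * ((cs.simple i * cs.simple j) ^ n)⁻¹,
        ε + ∑ k ∈ Finset.range n,
          (ind w (((cs.simple i * cs.simple j) ^ k)⁻¹ * cs.simple j * (cs.simple i * cs.simple j) ^ k)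
            + ind w (((cs.simple i * cs.simple j) ^ k)⁻¹ * (cs.simple j * cs.simple i * cs.simple j)
                * (cs.simple i * cs.simple j) ^ k))) := by
  have happ : ∀ (a : W) (b : ZMod 2), (etaPerm cs i * etaPerm cs j) (a, b)
      = ((cs.simple i * cs.simple j) * a * ((cs.simple i * cs.simple j))⁻¹,
          b + (ind a (cs.simple j) + ind a (cs.simple j * cs.simple i * cs.simple j))) := by
    intro a b
    rw [Equiv.Perm.mul_apply, etaPerm_apply, etaPerm_apply]
    unfold etaFun
    dsimp only
    refine Prod.ext ?_ ?_
    · show cs.simple i * (cs.simple j * a * cs.simple j) * cs.simple i = _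
      rw [mul_inv_rev, cs.inv_simple, cs.inv_simple]
      group
    · show b + ind a (cs.simple j) + ind (cs.simple j * a * cs.simple j) (cs.simple i) = _
      have h3 : ind (cs.simple j * a * cs.simple j) (cs.simple i)
          = ind a (cs.simple j * cs.simple i * cs.simple j) := by
        apply ind_congr
        have h2 : cs.simple j * a * cs.simple j = cs.simple j * a * (cs.simple j)⁻¹ := by
          rw [cs.inv_simple]
        rw [h2, conj_eq_iff, cs.inv_simple]
      rw [h3, add_assoc]
  induction n with
  | zero => simp [Equiv.Perm.one_apply]
  | succ n ih =>
    rw [pow_succ', Equiv.Perm.mul_apply, ih, happ]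
    simp only [Prod.mk.injEq]
    constructor
    · rw [pow_succ' (cs.simple i * cs.simple j) n, mul_inv_rev]
      simp only [mul_inv_rev, mul_assoc]
    · rw [Finset.sum_range_succ,
        ind_congr (conj_eq_iff ((cs.simple i * cs.simple j) ^ n) w (cs.simple j)),
        ind_congr (conj_eq_iff ((cs.simple i * cs.simple j) ^ n) w
          (cs.simple j * cs.simple i * cs.simple j))]
      ring

lemma etaPerm_liftable : M.IsLiftable (etaPerm cs) := by
  intro i j
  apply Equiv.ext
  rintro ⟨w, ε⟩
  rw [FF_pow, cs.simple_mul_simple_pow i j, Equiv.Perm.one_apply]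
  refine Prod.ext ?_ ?_
  · show 1 * w * 1⁻¹ = w
    group
  · show ε + _ = ε
    have hsum : ∑ k ∈ Finset.range (M i j),
        (ind w (((cs.simple i * cs.simple j) ^ k)⁻¹ * cs.simple j * (cs.simple i * cs.simple j) ^ k)
          + ind w (((cs.simple i * cs.simple j) ^ k)⁻¹ * (cs.simple j * cs.simple i * cs.simple j)
              * (cs.simple i * cs.simple j) ^ k))
        = ∑ k ∈ Finset.range (M i j),
          (ind w (cs.simple j * (cs.simple i * cs.simple j) ^ (2*k))
            + ind w (cs.simple j * (cs.simple i * cs.simple j) ^ (2*k+1))) := by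
      apply Finset.sum_congr rfl
      intro k _
      rw [conj_pow, conj_pow']
    rw [hsum, pair_sum (fun r => ind w (cs.simple j * (cs.simple i * cs.simple j) ^ r)) (M i j),
      two_mul, Finset.sum_range_add]
    have hshift : ∀ k : ℕ,
        ind w (cs.simple j * (cs.simple i * cs.simple j) ^ (M i j + k))
          = ind w (cs.simple j * (cs.simple i * cs.simple j) ^ k) := by
      intro k
      rw [pow_add, cs.simple_mul_simple_pow i j, one_mul]
    rw [Finset.sum_congr rfl (fun k _ => hshift k), z2_add_self, add_zero]

/-- The reflection representation homomorphism on `W × ZMod 2`. -/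
noncomputable def rho : W →* Equiv.Perm (W × ZMod 2) := cs.lift ⟨etaPerm cs, etaPerm_liftable cs⟩

/-- The parity cocycle. -/
noncomputable def eta (w t : W) : ZMod 2 := ((rho cs w) (t, 0)).2

lemma rho_simple (i : B) : rho cs (cs.simple i) = etaPerm cs i := cs.lift_apply_simple _ i

lemma rho_apply (w t : W) (ε : ZMod 2) : rho cs w (t, ε) = (w * t * w⁻¹, ε + eta cs w t) := by
  have main : ∀ t ε, ((rho cs w) (t, ε)).1 = w * t * w⁻¹
      ∧ ((rho cs w) (t, ε)).2 = ε + ((rho cs w) (t, 0)).2 := by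
    induction w using cs.simple_induction_left with
    | one =>
      intro t ε
      rw [map_one]
      constructor
      · show t = 1 * t * 1⁻¹; group
      · show ε = ε + 0; rw [add_zero]
    | mul_simple_left w i ih =>
      intro t ε
      have hmul : ∀ ε', rho cs (cs.simple i * w) (t, ε') = etaPerm cs i (rho cs w (t, ε')) := by
        intro ε'
        rw [map_mul, Equiv.Perm.mul_apply, rho_simple]
      have h1 := (ih t ε).1
      have h2 := (ih t ε).2
      have h10 := (ih t 0).1
      constructor
      · rw [hmul, etaPerm_apply]
        unfold etaFun
        show cs.simple i * (rho cs w (t, ε)).1 * cs.simple i = _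
        rw [h1, mul_inv_rev, cs.inv_simple]
        simp only [mul_assoc]
      · rw [hmul, hmul, etaPerm_apply, etaPerm_apply]
        unfold etaFun
        show (rho cs w (t, ε)).2 + ind (rho cs w (t, ε)).1 (cs.simple i)
            = ε + ((rho cs w (t, 0)).2 + ind (rho cs w (t, 0)).1 (cs.simple i))
        rw [h1, h2, h10, add_assoc]
  refine Prod.ext ?_ ?_
  · exact (main t ε).1
  · exact (main t ε).2

lemma eta_one (t : W) : eta cs 1 t = 0 := by
  unfold eta
  rw [map_one]
  rfl

lemma eta_mul (u v t : W) : eta cs (u * v) t = eta cs v t + eta cs u (v * t * v⁻¹) := by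
  have h2 : rho cs (u * v) (t, 0) = rho cs u (rho cs v (t, 0)) := by
    rw [map_mul, Equiv.Perm.mul_apply]
  rw [rho_apply cs (u * v) t 0, rho_apply cs v t 0,
    rho_apply cs u (v * t * v⁻¹) (0 + eta cs v t)] at h2
  have := congrArg Prod.snd h2
  simp only at this
  simp only [zero_add] at this
  exact this

lemma eta_simple (i : B) (t : W) : eta cs (cs.simple i) t = ind t (cs.simple i) := by
  unfold eta
  rw [rho_simple, etaPerm_apply]
  unfold etaFun
  show (0 : ZMod 2) + ind t (cs.simple i) = _
  rw [zero_add]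

lemma eta_inv (w t : W) : eta cs w⁻¹ t = eta cs w (w⁻¹ * t * w) := by
  have h0 : w * w⁻¹ = 1 := by group
  have h := eta_mul cs w w⁻¹ t
  rw [h0, eta_one, inv_inv] at h
  exact (z2_eq_of_add_eq_zero h.symm)

lemma eta_reflection_self {t : W} (ht : cs.IsReflection t) : eta cs t t = 1 := by
  obtain ⟨w, i, rfl⟩ := ht
  have e0 : w * cs.simple i * w⁻¹ = w * (cs.simple i * w⁻¹) := by group
  have e1 : eta cs (w * (cs.simple i * w⁻¹)) (w * cs.simple i * w⁻¹)
      = eta cs (cs.simple i * w⁻¹) (w * cs.simple i * w⁻¹)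
        + eta cs w ((cs.simple i * w⁻¹) * (w * cs.simple i * w⁻¹) * (cs.simple i * w⁻¹)⁻¹) :=
    eta_mul cs w (cs.simple i * w⁻¹) (w * cs.simple i * w⁻¹)
  have e2 : (cs.simple i * w⁻¹) * (w * cs.simple i * w⁻¹) * (cs.simple i * w⁻¹)⁻¹
      = cs.simple i := by
    rw [mul_inv_rev, cs.inv_simple, inv_inv]
    simp only [mul_assoc, inv_mul_cancel_left, cs.simple_mul_simple_cancel_left]
  have e3 : eta cs (cs.simple i * w⁻¹) (w * cs.simple i * w⁻¹)
      = eta cs w⁻¹ (w * cs.simple i * w⁻¹)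
        + eta cs (cs.simple i) (w⁻¹ * (w * cs.simple i * w⁻¹) * w) := by
    have := eta_mul cs (cs.simple i) w⁻¹ (w * cs.simple i * w⁻¹)
    rw [inv_inv] at this
    exact this
  have e4 : w⁻¹ * (w * cs.simple i * w⁻¹) * w = cs.simple i := by group
  have e5 : eta cs w⁻¹ (w * cs.simple i * w⁻¹) = eta cs w (cs.simple i) := by
    rw [eta_inv, e4]
  nth_rewrite 1 [e0]
  rw [e1, e2, e3, e4, e5, eta_simple, ind_self]
  have : ∀ x : ZMod 2, x + 1 + x = 1 := by decide
  exact this _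

lemma eta_word (ω : List B) (t : W) :
    eta cs (cs.wordProd ω) t = ((cs.rightInvSeq ω).map (fun v => ind t v)).sum := by
  induction ω with
  | nil =>
    rw [cs.wordProd_nil]
    show eta cs 1 t = ([] : List (ZMod 2)).sum
    rw [eta_one]
    rfl
  | cons i ω ih =>
    rw [cs.wordProd_cons, eta_mul, ih]
    show _ = ((((cs.wordProd ω)⁻¹ * cs.simple i * cs.wordProd ω) :: cs.rightInvSeq ω).map
        (fun v => ind t v)).sum
    rw [List.map_cons, List.sum_cons, eta_simple]
    have : ind (cs.wordProd ω * t * (cs.wordProd ω)⁻¹) (cs.simple i)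
        = ind t ((cs.wordProd ω)⁻¹ * cs.simple i * cs.wordProd ω) :=
      ind_congr (conj_eq_iff (cs.wordProd ω) t (cs.simple i))
    rw [this, add_comm]

lemma mem_ris_of_eta_one {ω : List B} {t : W} (h : eta cs (cs.wordProd ω) t = 1) :
    t ∈ cs.rightInvSeq ω := by
  by_contra hmem
  have hz : eta cs (cs.wordProd ω) t = 0 := by
    rw [eta_word]
    apply List.sum_eq_zero
    intro x hx
    obtain ⟨v, hv, rfl⟩ := List.mem_map.mp hx
    exact ind_eq_zero (fun ht => hmem (ht ▸ hv))
  rw [hz] at h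
  exact absurd h (by decide)

lemma descent_of_eta_one {w t : W} (h : eta cs w t = 1) :
    cs.length (w * t) < cs.length w := by
  obtain ⟨ω, hred, hw⟩ := cs.exists_reduced_word' w
  rw [hw] at h ⊢
  have hmem := mem_ris_of_eta_one cs h
  exact (cs.isRightInversion_of_mem_rightInvSeq hred hmem).2

lemma eta_zero_of_ascent {w t : W} (h : ¬ cs.length (w * t) < cs.length w) :
    eta cs w t = 0 := by
  rcases z2_cases (eta cs w t) with h0 | h1
  · exact h0
  · exact absurd (descent_of_eta_one cs h1) h

lemma eta_one_of_descent {w t : W} (ht : cs.IsReflection t)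
    (h : cs.length (w * t) < cs.length w) : eta cs w t = 1 := by
  rcases z2_cases (eta cs w t) with h0 | h1
  swap
  · exact h1
  exfalso
  have htt : (w * t) * t = w := by rw [mul_assoc, ht.mul_self, mul_one]
  have ht3 : t * t * t⁻¹ = t := by rw [ht.mul_self, one_mul, ht.inv]
  have key := eta_mul cs (w * t) t t
  rw [htt, ht3, eta_reflection_self cs ht, h0] at key
  have h2 : eta cs (w * t) t = 1 := z2_cancel' key
  have h3 := descent_of_eta_one cs h2
  rw [htt] at h3
  omega

lemma strong_exchange {ω : List B} (hred : cs.IsReduced ω) {t : W} (ht : cs.IsReflection t)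
    (h : cs.length (cs.wordProd ω * t) < cs.length (cs.wordProd ω)) :
    ∃ j < ω.length, cs.wordProd (ω.eraseIdx j) = cs.wordProd ω * t := by
  have h1 := eta_one_of_descent cs ht h
  have hmem := mem_ris_of_eta_one cs h1
  obtain ⟨j, hj, hgt⟩ := List.mem_iff_getElem.mp hmem
  have hj' : j < ω.length := by
    have := cs.length_rightInvSeq ω
    omega
  refine ⟨j, hj', ?_⟩
  have := cs.wordProd_mul_getD_rightInvSeq ω j
  rw [List.getD_eq_getElem _ _ hj, hgt] at this
  exact this.symm

lemma isReduced_nil : cs.IsReduced ([] : List B) := by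
  unfold CoxeterSystem.IsReduced
  rw [cs.wordProd_nil, cs.length_one]
  rfl

lemma exists_reduced_sublist (ω : List B) :
    ∃ σ, σ.Sublist ω ∧ cs.IsReduced σ ∧ cs.wordProd σ = cs.wordProd ω := by
  induction ω using List.reverseRecOn with
  | nil => exact ⟨[], List.Sublist.refl _, isReduced_nil cs, rfl⟩
  | append_singleton τ i ih =>
    obtain ⟨σ, hsub, hred, hprod⟩ := ih
    have hlen : σ.length = cs.length (cs.wordProd σ) := hred.symm
    rcases cs.length_mul_simple (cs.wordProd σ) i with hup | hdown
    · refine ⟨σ ++ [i], hsub.append (List.Sublist.refl _), ?_, ?_⟩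
      · unfold CoxeterSystem.IsReduced
        rw [cs.wordProd_append, cs.wordProd_singleton, hup, List.length_append]
        simp [← hlen]
      · rw [cs.wordProd_append, cs.wordProd_append, hprod]
    · have hlt : cs.length (cs.wordProd σ * cs.simple i) < cs.length (cs.wordProd σ) := by
        omega
      obtain ⟨j, hj, heq⟩ := strong_exchange cs hred (cs.isReflection_simple i) hlt
      refine ⟨σ.eraseIdx j,
        ((σ.eraseIdx_sublist j).trans hsub).trans (List.sublist_append_left τ [i]), ?_, ?_⟩
      · unfold CoxeterSystem.IsReduced
        rw [heq, List.length_eraseIdx]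
        simp only [hj, if_pos]
        omega
      · rw [heq, cs.wordProd_append, cs.wordProd_singleton, hprod]

/-- A single step in the Bruhat order. -/
def blt (x y : W) : Prop := ∃ t, cs.IsReflection t ∧ x * t = y ∧ cs.length x < cs.length y

/-- The Bruhat order, as the reflexive transitive closure of single steps. -/
def BK (x y : W) : Prop := Relation.ReflTransGen (blt cs) x y

lemma BK_subword {v w : W} (h : BK cs v w) :
    ∀ ω : List B, cs.IsReduced ω → cs.wordProd ω = w →
      ∃ σ, σ.Sublist ω ∧ cs.IsReduced σ ∧ cs.wordProd σ = v := by
  induction h with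
  | refl =>
    intro ω hred hw
    exact ⟨ω, List.Sublist.refl _, hred, hw⟩
  | @tail z y hvz hzy ih =>
    intro ω hred hw
    obtain ⟨t, ht, hzt, hlt⟩ := hzy
    have hz : cs.wordProd ω * t = z := by
      rw [hw, ← hzt, mul_assoc, ht.mul_self, mul_one]
    have hlen : cs.length (cs.wordProd ω * t) < cs.length (cs.wordProd ω) := by
      rw [hz, hw]; exact hlt
    obtain ⟨j, hj, heq⟩ := strong_exchange cs hred ht hlen
    obtain ⟨σ₁, hs1, hr1, hp1⟩ := exists_reduced_sublist cs (ω.eraseIdx j)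
    obtain ⟨σ₂, hs2, hr2, hp2⟩ := ih σ₁ hr1 (by rw [hp1, heq, hz])
    exact ⟨σ₂, hs2.trans (hs1.trans (ω.eraseIdx_sublist j)), hr2, hp2⟩

lemma sl_step {a b : W} (i : B) (ha : cs.length (a * cs.simple i) = cs.length a + 1)
    (hb : cs.length (cs.simple i * b) = cs.length b + 1) :
    blt cs (a * b) (a * cs.simple i * b) := by
  have hrefl : cs.IsReflection (b⁻¹ * cs.simple i * b) := ⟨b⁻¹, i, by rw [inv_inv]⟩
  refine ⟨b⁻¹ * cs.simple i * b, hrefl, by group, ?_⟩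
  have hcanc : (a * cs.simple i * b) * (b⁻¹ * cs.simple i * b) = a * b := by
    have h1 : (a * cs.simple i * b) * (b⁻¹ * cs.simple i * b)
        = a * (cs.simple i * cs.simple i) * b := by group
    rw [h1, cs.simple_mul_simple_self, mul_one]
  have h1 : eta cs (a * cs.simple i * b) (b⁻¹ * cs.simple i * b) = 1 := by
    have hconj : b * (b⁻¹ * cs.simple i * b) * b⁻¹ = cs.simple i := by group
    have e1 : eta cs (a * cs.simple i * b) (b⁻¹ * cs.simple i * b)
        = eta cs b (b⁻¹ * cs.simple i * b) + eta cs (a * cs.simple i) (cs.simple i) := by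
      have := eta_mul cs (a * cs.simple i) b (b⁻¹ * cs.simple i * b)
      rw [hconj] at this
      exact this
    have e2 : eta cs (a * cs.simple i) (cs.simple i) = 1 + eta cs a (cs.simple i) := by
      have h := eta_mul cs a (cs.simple i) (cs.simple i)
      rw [eta_simple, ind_self, cs.inv_simple, cs.simple_mul_simple_self, one_mul] at h
      exact h
    have e3 : eta cs a (cs.simple i) = 0 := by
      apply eta_zero_of_ascent
      omega
    have e4 : eta cs b (b⁻¹ * cs.simple i * b) = 0 := by
      have hc2 : (cs.simple i * b) * (b⁻¹ * cs.simple i * b) = b := by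
        have hh : (cs.simple i * b) * (b⁻¹ * cs.simple i * b)
            = (cs.simple i * cs.simple i) * b := by group
        rw [hh, cs.simple_mul_simple_self, one_mul]
      have e6 : eta cs (cs.simple i * b) (b⁻¹ * cs.simple i * b) = 1 := by
        apply eta_one_of_descent cs hrefl
        rw [hc2]
        omega
      have e5 := eta_mul cs (cs.simple i) b (b⁻¹ * cs.simple i * b)
      rw [hconj, eta_simple, ind_self] at e5
      rw [e6] at e5
      exact z2_cancel e5
    rw [e1, e4, e2, e3]
    decide
  have hfin := descent_of_eta_one cs h1
  rw [hcanc] at hfin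
  exact hfin

/-- One step of a gallery walk: multiply by a simple reflection or stay (only on descents). -/
def WStep (w : W) (j : B) (w' : W) : Prop :=
  w' = w * cs.simple j ∨ (w' = w ∧ cs.IsRightDescent w j)

/-- Walk along a word, one step per letter. -/
def Wlk : W → List B → W → Prop
  | w, [], u => u = w
  | w, (j :: ω), u => ∃ w', WStep cs w j w' ∧ Wlk w' ω u

lemma wlk_append_singleton {w u u' : W} {j : B} :
    ∀ {ω : List B}, Wlk cs w ω u → WStep cs u j u' → Wlk cs w (ω ++ [j]) u' := by
  intro ω
  induction ω generalizing w with
  | nil =>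
    intro hw hs
    rw [show u = w from hw] at hs
    exact ⟨u', hs, rfl⟩
  | cons k ω ih =>
    rintro ⟨w₁, hst, hwlk⟩ hs
    exact ⟨w₁, hst, ih hwlk hs⟩

lemma walk_le : ∀ (ω : List B), cs.IsReduced ω → ∀ w u : W,
    Wlk cs w ω u → BK cs (w * cs.wordProd ω) u := by
  intro ω
  induction ω with
  | nil =>
    intro _ w u hw
    rw [cs.wordProd_nil, mul_one, show u = w from hw]
    exact Relation.ReflTransGen.refl
  | cons j ω ih =>
    intro hred w u hw
    obtain ⟨w', hst, hwlk⟩ := hw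
    have hredω : cs.IsReduced ω := by
      have := hred.drop (j := 1)
      simpa using this
    have hlenω : cs.length (cs.wordProd ω) = ω.length := hredω
    have hlencons : cs.length (cs.simple j * cs.wordProd ω) = cs.length (cs.wordProd ω) + 1 := by
      have h1 : cs.length (cs.wordProd (j :: ω)) = ω.length + 1 := by
        have h2 : cs.length (cs.wordProd (j :: ω)) = (j :: ω).length := hred
        rw [h2]
        simp
      rw [← cs.wordProd_cons, h1, hlenω]
    have hK := ih hredω w' u hwlk
    rcases hst with hmul | hstay
    · rw [cs.wordProd_cons, ← mul_assoc, ← hmul]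
      exact hK
    · obtain ⟨hstay, hdesc⟩ := hstay
      rw [hstay] at hK
      have hd : cs.length (w * cs.simple j) < cs.length w := hdesc
      have hwsj : cs.length (w * cs.simple j * cs.simple j) = cs.length (w * cs.simple j) + 1 := by
        rw [cs.simple_mul_simple_cancel_right]
        rcases cs.length_mul_simple w j with h | h <;> omega
      have hstep : blt cs ((w * cs.simple j) * cs.wordProd ω)
          ((w * cs.simple j) * cs.simple j * cs.wordProd ω) :=
        sl_step cs j hwsj hlencons
      rw [cs.simple_mul_simple_cancel_right] at hstep
      rw [cs.wordProd_cons, ← mul_assoc]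
      exact Relation.ReflTransGen.head hstep hK

section GroupoidPart

variable {G : Type*} [Groupoid G]
variable {δ : ∀ ⦃x y : G⦄, (x ⟶ y) → W}

lemma ginv_ginv {x y : G} (f : x ⟶ y) : Groupoid.inv (Groupoid.inv f) = f := by
  simp [Groupoid.inv_eq_inv]

lemma step_comp (h2 : WG2' cs δ) {x y z : G} (g : x ⟶ y) (e : y ⟶ z) {i : B}
    (he : δ e = cs.simple i) : WStep cs (δ g) i (δ (g ≫ e)) := by
  have hcon : δ (Groupoid.inv g ≫ (g ≫ e)) = cs.simple i := by
    rw [show Groupoid.inv g ≫ (g ≫ e) = e from by simp [Groupoid.inv_eq_inv], he]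
  have H := h2 g (g ≫ e) i hcon
  by_cases hd : cs.IsRightDescent (δ g) i
  · rcases H.1 hd with h | h
    · exact Or.inr ⟨h, hd⟩
    · exact Or.inl h
  · exact Or.inl (H.2 hd)

lemma delta_inv_simple (h1 : WG1 δ) (h2 : WG2' cs δ) {x y : G} (e : x ⟶ y) {i : B}
    (he : δ e = cs.simple i) : δ (Groupoid.inv e) = cs.simple i := by
  have hcon : δ (Groupoid.inv (Groupoid.inv e) ≫ 𝟙 y) = cs.simple i := by
    rw [show Groupoid.inv (Groupoid.inv e) ≫ 𝟙 y = e from by simp [Groupoid.inv_eq_inv], he]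
  have H := h2 (Groupoid.inv e) (𝟙 y) i hcon
  by_cases hd : cs.IsRightDescent (δ (Groupoid.inv e)) i
  · rcases H.1 hd with h | h
    · rw [h1 y] at h
      exact absurd (h.symm ▸ hd) (cs.not_isRightDescent_one i)
    · rw [h1 y] at h
      have hz := eq_inv_of_mul_eq_one_left h.symm
      rw [cs.inv_simple] at hz
      exact hz
  · have h := H.2 hd
    rw [h1 y] at h
    have hz := eq_inv_of_mul_eq_one_left h.symm
    rw [cs.inv_simple] at hz
    exact hz

lemma gem (h1 : WG1 δ) (h2 : WG2' cs δ) (h3 : WG3 cs δ) {x y z : G} (g : x ⟶ y) (C : x ⟶ z)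
    (hcon : δ (Groupoid.inv g ≫ C) = 1) (hC : δ C ≠ 1) : δ C = δ g := by
  obtain ⟨i, hdesc⟩ := cs.exists_rightDescent_of_ne_one hC
  obtain ⟨w', f, he, hf⟩ := h3 C i hdesc
  have hd' : δ (Groupoid.inv g ≫ f) = cs.simple i := by
    have hcon2 : δ (Groupoid.inv (Groupoid.inv g ≫ f) ≫ (Groupoid.inv g ≫ C))
        = cs.simple i := by
      rw [show Groupoid.inv (Groupoid.inv g ≫ f) ≫ (Groupoid.inv g ≫ C)
        = Groupoid.inv f ≫ C from by simp [Groupoid.inv_eq_inv], he]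
    have H := h2 (Groupoid.inv g ≫ f) (Groupoid.inv g ≫ C) i hcon2
    by_cases hd : cs.IsRightDescent (δ (Groupoid.inv g ≫ f)) i
    · rcases H.1 hd with h | h
      · rw [hcon] at h
        exact absurd (h ▸ hd) (cs.not_isRightDescent_one i)
      · rw [hcon] at h
        have hz := eq_inv_of_mul_eq_one_left h.symm
        rw [cs.inv_simple] at hz
        exact hz
    · have h := H.2 hd
      rw [hcon] at h
      have hz := eq_inv_of_mul_eq_one_left h.symm
      rw [cs.inv_simple] at hz
      exact hz
  have H2 := h2 g f i hd'
  by_cases hd : cs.IsRightDescent (δ g) i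
  · rcases H2.1 hd with h | h
    · exfalso
      have l1 : cs.length (δ C * cs.simple i) < cs.length (δ C) := hdesc
      have hCf : δ C = δ f * cs.simple i := by
        rw [hf, cs.simple_mul_simple_cancel_right]
      have l2 : cs.length (δ g * cs.simple i) < cs.length (δ g) := hd
      rw [← h] at l2
      rw [hCf, cs.simple_mul_simple_cancel_right] at l1
      omega
    · exact mul_right_cancel (hf.symm.trans h)
  · have h := H2.2 hd
    exact mul_right_cancel (hf.symm.trans h)

lemma delta_inv_one (h1 : WG1 δ) (h2 : WG2' cs δ) (h3 : WG3 cs δ) :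
    ∀ (m : ℕ) {x y : G} (g : x ⟶ y), δ g = 1 → cs.length (δ (Groupoid.inv g)) = m →
      δ (Groupoid.inv g) = 1 := by
  intro m
  induction m using Nat.strong_induction_on with
  | _ m ih =>
    intro x y g hg hm
    by_contra hne
    obtain ⟨i, hdesc⟩ := cs.exists_rightDescent_of_ne_one hne
    obtain ⟨u, f, he, hf⟩ := h3 (Groupoid.inv g) i hdesc
    have hlen : cs.length (δ (Groupoid.inv g) * cs.simple i) < m := by
      rw [← hm]; exact hdesc
    by_cases hif : δ (Groupoid.inv f) = 1
    · have hfin := ih (cs.length (δ f)) (by rw [hf]; exact hlen) (Groupoid.inv f) hif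
        (by rw [ginv_ginv])
      rw [ginv_ginv, hf] at hfin
      have hinv : δ (Groupoid.inv g) = cs.simple i := by
        have hz := eq_inv_of_mul_eq_one_left hfin
        rw [cs.inv_simple] at hz
        exact hz
      have := delta_inv_simple cs h1 h2 (Groupoid.inv g) hinv
      rw [ginv_ginv, hg] at this
      have hls := cs.length_simple i
      rw [← this, cs.length_one] at hls
      omega
    · have hcon : δ (Groupoid.inv (Groupoid.inv f ≫ Groupoid.inv g) ≫ Groupoid.inv f) = 1 := by
        rw [show Groupoid.inv (Groupoid.inv f ≫ Groupoid.inv g) ≫ Groupoid.inv f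
          = g from by simp [Groupoid.inv_eq_inv], hg]
      have hgem := gem cs h1 h2 h3 (Groupoid.inv f ≫ Groupoid.inv g) (Groupoid.inv f) hcon hif
      rw [he] at hgem
      have := delta_inv_simple cs h1 h2 (Groupoid.inv f) hgem
      rw [ginv_ginv, hf] at this
      have : δ (Groupoid.inv g) = 1 := by
        have h5 := congrArg (· * cs.simple i) this
        rw [cs.simple_mul_simple_cancel_right, cs.simple_mul_simple_self] at h5
        exact h5
      exact hne this

lemma comp_delta_one (h1 : WG1 δ) (h2 : WG2' cs δ) (h3 : WG3 cs δ) {x y z : G}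
    (g : x ⟶ y) (h : y ⟶ z) (hh : δ h = 1) : δ (g ≫ h) = δ g := by
  by_cases hC : δ (g ≫ h) = 1
  · by_cases hg : δ g = 1
    · rw [hC, hg]
    · have hcon : δ (Groupoid.inv (g ≫ h) ≫ g) = 1 := by
        rw [show Groupoid.inv (g ≫ h) ≫ g = Groupoid.inv h from by simp [Groupoid.inv_eq_inv]]
        exact delta_inv_one cs h1 h2 h3 (cs.length (δ (Groupoid.inv h))) h hh rfl
      have := gem cs h1 h2 h3 (g ≫ h) g hcon hg
      exact absurd (this.trans hC) hg
  · apply gem cs h1 h2 h3 g (g ≫ h) _ hC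
    rw [show Groupoid.inv g ≫ (g ≫ h) = h from by simp [Groupoid.inv_eq_inv], hh]

lemma geo (h1 : WG1 δ) (h2 : WG2' cs δ) (h3 : WG3 cs δ) :
    ∀ (n : ℕ) {y z : G} (h : y ⟶ z), cs.length (δ h) = n →
      ∃ ω : List B, cs.IsReduced ω ∧ cs.wordProd ω = δ h ∧
        ∀ {x : G} (g : x ⟶ y), Wlk cs (δ g) ω (δ (g ≫ h)) := by
  intro n
  induction n with
  | zero =>
    intro y z h hlen
    have hh : δ h = 1 := cs.length_eq_zero_iff.mp hlen
    refine ⟨[], isReduced_nil cs, by rw [cs.wordProd_nil, hh], ?_⟩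
    intro x g
    show δ (g ≫ h) = δ g
    exact comp_delta_one cs h1 h2 h3 g h hh
  | succ n ih =>
    intro y z h hlen
    have hne : δ h ≠ 1 := by
      intro hcontra
      rw [hcontra, cs.length_one] at hlen
      omega
    obtain ⟨i, hdesc⟩ := cs.exists_rightDescent_of_ne_one hne
    obtain ⟨u, f, he, hf⟩ := h3 h i hdesc
    have hd : cs.length (δ h * cs.simple i) < cs.length (δ h) := hdesc
    have hlenf : cs.length (δ f) = n := by
      rcases cs.length_mul_simple (δ h) i with hh | hh <;> rw [hf] <;> omega
    obtain ⟨ω, hred, hprod, hwalk⟩ := ih f hlenf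
    have hlenω : ω.length = n := by
      have := hred
      unfold CoxeterSystem.IsReduced at this
      rw [hprod] at this
      omega
    refine ⟨ω ++ [i], ?_, ?_, ?_⟩
    · unfold CoxeterSystem.IsReduced
      rw [cs.wordProd_append, cs.wordProd_singleton, hprod, hf,
        cs.simple_mul_simple_cancel_right, List.length_append]
      simp [hlenω, hlen]
    · rw [cs.wordProd_append, cs.wordProd_singleton, hprod, hf,
        cs.simple_mul_simple_cancel_right]
    · intro x g
      apply wlk_append_singleton cs (hwalk g)
      have hcomp : (g ≫ f) ≫ (Groupoid.inv f ≫ h) = g ≫ h := by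
        simp [Groupoid.inv_eq_inv]
      have := step_comp cs h2 (g ≫ f) (Groupoid.inv f ≫ h) he
      rw [hcomp] at this
      exact this

end GroupoidPart

end Stmt9Aux

/-- If `δ` satisfies (WG1), (WG2'), and (WG3), then `δ` satisfies the triangle
inequality (WG2). -/
theorem stmt9 (cs : CoxeterSystem M W) (δ : ∀ ⦃x y : G⦄, (x ⟶ y) → W)
    (h1 : WG1 δ) (h2 : WG2' cs δ) (h3 : WG3 cs δ) :
    WG2 cs δ := by
  unfold WG2 BruhatLE
  intro x y z g h
  obtain ⟨ω, hred, hprod, hwalk⟩ := Stmt9Aux.geo cs h1 h2 h3 (cs.length (δ h)) h rfl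
  have hK := Stmt9Aux.walk_le cs ω hred (δ g) (δ (g ≫ h)) (hwalk g)
  rw [hprod] at hK
  obtain ⟨ω₀, hred₀, hprod₀⟩ := cs.exists_reduced_word' (δ (g ≫ h))
  obtain ⟨σ, hsub, _, hσ⟩ := Stmt9Aux.BK_subword cs hK ω₀ hred₀ hprod₀.symm
  exact ⟨ω₀, hred₀, hprod₀.symm, σ, hsub, hσ⟩
end

section
/- Let (Δ, δ) be a building of type W. Define G to be the connected simply connected groupoid with vertex set Δ (i.e., exactly one edge between any ordered pair of vertices), and define δ': G → W by δ'(g) = δ(ι(g), τ(g)). Then δ': G → W is a strict W-groupoid: it is weak and satisfies (WG1), (WG2), (WG3), and δ'(g) = 1 implies g is an identity edge. -/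
open List

variable {B : Type*} {W : Type*} [Group W] {M : CoxeterMatrix B}

variable {Δ : Type*}

/-- (WD1): `δ(C,D) = 1` iff `C = D`. -/
def WD1 (d : Δ → Δ → W) : Prop := ∀ C D : Δ, d C D = 1 ↔ C = D

/-- (WD2): if `δ(C,D) = w` and `δ(D,D') = s ∈ S`, then `δ(C,D') ∈ {ws, w}` if
`ws < w`, and `δ(C,D') = ws` if `ws > w`. -/
def WD2 (cs : CoxeterSystem M W) (d : Δ → Δ → W) : Prop :=
  ∀ (C D D' : Δ) (i : B), d D D' = cs.simple i →
    (cs.IsRightDescent (d C D) i → d C D' = d C D * cs.simple i ∨ d C D' = d C D) ∧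
    (¬ cs.IsRightDescent (d C D) i → d C D' = d C D * cs.simple i)

/-- (WD3): for all `C, D` and `s ∈ S` there is `D'` with `δ(D,D') = s` and
`δ(C,D') = δ(C,D)s`. -/
def WD3 (cs : CoxeterSystem M W) (d : Δ → Δ → W) : Prop :=
  ∀ (C D : Δ) (i : B), ∃ D' : Δ, d D D' = cs.simple i ∧ d C D' = d C D * cs.simple i



namespace StrictAux

open CoxeterSystem

variable (cs : CoxeterSystem M W)

open Classical in
/-- The sign of `t` with respect to a list of reflections. -/
noncomputable def signList (t : W) (l : List W) : ℤˣ :=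
  (l.map (fun x => if x = t then (-1 : ℤˣ) else 1)).prod

open Classical in
lemma signList_cons (t x : W) (l : List W) :
    signList t (x :: l) = (if x = t then (-1 : ℤˣ) else 1) * signList t l := by
  simp [signList]

lemma signList_eq_one_of_not_mem {t : W} {l : List W} (h : t ∉ l) : signList t l = 1 := by
  classical
  induction l with
  | nil => rfl
  | cons x l ih =>
    rw [signList_cons]
    have hx : x ≠ t := fun hx => h (hx ▸ mem_cons_self)
    rw [if_neg hx, one_mul]
    exact ih (fun hm => h (mem_cons_of_mem x hm))

lemma conj_eq_iff (a x b : W) : a * x * a⁻¹ = b ↔ x = a⁻¹ * b * a := by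
  constructor
  · intro h; rw [← h]; group
  · intro h; rw [h]; group

open Classical in
/-- The function underlying the reflection-sign permutation attached to a simple
reflection. -/
noncomputable def phiFun (i : B) : W × ℤˣ → W × ℤˣ :=
  fun x => (cs.simple i * x.1 * cs.simple i, if x.1 = cs.simple i then -x.2 else x.2)

lemma phiFun_involutive (i : B) : Function.Involutive (phiFun cs i) := by
  rintro ⟨t, ε⟩
  classical
  simp only [phiFun]
  by_cases h : t = cs.simple i
  · subst h
    simp [cs.simple_mul_simple_cancel_right, cs.simple_mul_simple_cancel_left]
  · have h2 : cs.simple i * t * cs.simple i ≠ cs.simple i := by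
      intro hc
      apply h
      have := congrArg (fun z => cs.simple i * z * cs.simple i) hc
      simpa [mul_assoc, cs.simple_mul_simple_self, cs.simple_mul_simple_cancel_left,
        cs.simple_mul_simple_cancel_right] using this
    simp only [if_neg h, if_neg h2]
    rw [show cs.simple i * (cs.simple i * t * cs.simple i) * cs.simple i = t by
      rw [← mul_assoc, ← mul_assoc, cs.simple_mul_simple_self]
      simp [mul_assoc, cs.simple_mul_simple_self]]

/-- The reflection-sign permutation attached to a simple reflection. -/
noncomputable def phi (i : B) : Equiv.Perm (W × ℤˣ) :=
  (phiFun_involutive cs i).toPerm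

open Classical in
lemma phi_apply (i : B) (t : W) (ε : ℤˣ) :
    phi cs i (t, ε) = (cs.simple i * t * cs.simple i,
      if t = cs.simple i then -ε else ε) := rfl

lemma simple_mul_pow (i j : B) (n : ℕ) :
    cs.simple j * (cs.simple i * cs.simple j) ^ n
      = ((cs.simple i * cs.simple j) ^ n)⁻¹ * cs.simple j := by
  have key' : cs.simple j * (cs.simple i * cs.simple j)
      = (cs.simple i * cs.simple j)⁻¹ * cs.simple j := by
    rw [mul_inv_rev, cs.inv_simple, cs.inv_simple, ← mul_assoc]
  induction n with
  | zero => simp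
  | succ n ih =>
    calc cs.simple j * (cs.simple i * cs.simple j) ^ (n + 1)
        = cs.simple j * (cs.simple i * cs.simple j) ^ n * (cs.simple i * cs.simple j) := by
          rw [pow_succ, ← mul_assoc]
      _ = ((cs.simple i * cs.simple j) ^ n)⁻¹ *
            (cs.simple j * (cs.simple i * cs.simple j)) := by rw [ih, mul_assoc]
      _ = ((cs.simple i * cs.simple j) ^ n)⁻¹ *
            ((cs.simple i * cs.simple j)⁻¹ * cs.simple j) := by rw [key']
      _ = ((cs.simple i * cs.simple j) ^ (n + 1))⁻¹ * cs.simple j := by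
          conv_rhs => rw [pow_succ', mul_inv_rev, mul_assoc]

lemma inv_pow_simple_mul_pow (i j : B) (a b : ℕ) :
    ((cs.simple i * cs.simple j) ^ a)⁻¹ * cs.simple j * (cs.simple i * cs.simple j) ^ b
      = ((cs.simple i * cs.simple j) ^ (a + b))⁻¹ * cs.simple j := by
  rw [mul_assoc, simple_mul_pow cs i j b, ← mul_assoc, ← mul_inv_rev, ← pow_add,
    Nat.add_comm b a]

open Classical in
lemma phi_mul_pow_apply (i j : B) (k : ℕ) (t : W) (ε : ℤˣ) :
    ((phi cs i * phi cs j) ^ k) (t, ε) =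
      ((cs.simple i * cs.simple j) ^ k * t * ((cs.simple i * cs.simple j) ^ k)⁻¹,
        ε * ∏ n ∈ Finset.range (2 * k),
          (if t = ((cs.simple i * cs.simple j) ^ n)⁻¹ * cs.simple j then (-1 : ℤˣ) else 1)) := by
  classical
  induction k with
  | zero => simp
  | succ k ih =>
    set p := cs.simple i * cs.simple j with hp
    rw [pow_succ', Equiv.Perm.mul_apply, ih, Equiv.Perm.mul_apply, phi_apply, phi_apply]
    set A := p ^ k * t * (p ^ k)⁻¹ with hA
    have hAiff : A = cs.simple j ↔ t = (p ^ (2 * k))⁻¹ * cs.simple j := by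
      rw [hA, conj_eq_iff, inv_pow_simple_mul_pow cs i j k k, two_mul]
    have hBiff : cs.simple j * A * cs.simple j = cs.simple i
        ↔ t = (p ^ (2 * k + 1))⁻¹ * cs.simple j := by
      have e1 := conj_eq_iff (cs.simple j) A (cs.simple i)
      rw [cs.inv_simple] at e1
      have e2 : cs.simple j * cs.simple i * cs.simple j = p⁻¹ * cs.simple j := by
        rw [hp, mul_inv_rev, cs.inv_simple, cs.inv_simple]
      rw [e1, e2, hA, conj_eq_iff, ← mul_assoc, ← mul_inv_rev, ← pow_succ',
        inv_pow_simple_mul_pow cs i j (k + 1) k]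
      have : k + 1 + k = 2 * k + 1 := by omega
      rw [this]
    have hfst : cs.simple i * (cs.simple j * A * cs.simple j) * cs.simple i
        = p ^ (k + 1) * t * (p ^ (k + 1))⁻¹ := by
      have h1 : p ^ (k + 1) = p * p ^ k := by rw [pow_succ']
      rw [h1, hA, hp]
      simp [mul_inv_rev, mul_assoc]
    have hrange : 2 * (k + 1) = (2 * k + 1) + 1 := by omega
    rw [Prod.mk.injEq]
    refine ⟨hfst, ?_⟩
    rw [hrange, Finset.prod_range_succ, Finset.prod_range_succ]
    have c1 : (A = cs.simple j) = (t = (p ^ (2 * k))⁻¹ * cs.simple j) := propext hAiff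
    have c2 : (cs.simple j * A * cs.simple j = cs.simple i)
        = (t = (p ^ (2 * k + 1))⁻¹ * cs.simple j) := propext hBiff
    simp only [c1, c2]
    by_cases h1 : t = (p ^ (2 * k))⁻¹ * cs.simple j
    · by_cases h2 : t = (p ^ (2 * k + 1))⁻¹ * cs.simple j
      · simp only [if_pos h1, if_pos h2]
        simp [mul_neg, mul_one, neg_neg, mul_neg_one]
      · simp only [if_pos h1, if_neg h2]
        simp [mul_neg, mul_one, neg_neg, mul_neg_one]
    · by_cases h2 : t = (p ^ (2 * k + 1))⁻¹ * cs.simple j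
      · simp only [if_neg h1, if_pos h2]
        simp [mul_neg, mul_one, neg_neg, mul_neg_one]
      · simp only [if_neg h1, if_neg h2]
        simp [mul_neg, mul_one, neg_neg, mul_neg_one]

lemma phi_liftable : M.IsLiftable (fun i => phi cs i) := by
  classical
  intro i j
  apply Equiv.ext
  rintro ⟨t, ε⟩
  rw [phi_mul_pow_apply]
  have hone : (cs.simple i * cs.simple j) ^ M i j = 1 := cs.simple_mul_simple_pow i j
  have hsign : ∀ n : ℕ, ((cs.simple i * cs.simple j) ^ (M i j + n))⁻¹
      = ((cs.simple i * cs.simple j) ^ n)⁻¹ := by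
    intro n
    rw [pow_add, hone, one_mul]
  have hprod : (∏ n ∈ Finset.range (2 * M i j),
      (if t = ((cs.simple i * cs.simple j) ^ n)⁻¹ * cs.simple j then (-1 : ℤˣ) else 1)) = 1 := by
    rw [two_mul, Finset.prod_range_add]
    have : ∀ n ∈ Finset.range (M i j),
        (if t = ((cs.simple i * cs.simple j) ^ (M i j + n))⁻¹ * cs.simple j
          then (-1 : ℤˣ) else 1)
        = (if t = ((cs.simple i * cs.simple j) ^ n)⁻¹ * cs.simple j then (-1 : ℤˣ) else 1) := by
      intro n _
      rw [hsign n]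
    rw [Finset.prod_congr rfl this, Int.units_mul_self]
  rw [hone, hprod]
  simp

end StrictAux

namespace StrictAux

variable {B : Type*} {W : Type*} [Group W] {M : CoxeterMatrix B}
variable (cs : CoxeterSystem M W)

open CoxeterSystem List

/-- The reflection-sign representation of `W`. -/
noncomputable def theta : W →* Equiv.Perm (W × ℤˣ) :=
  cs.lift ⟨fun i => phi cs i, phi_liftable cs⟩

lemma theta_simple (i : B) : theta cs (cs.simple i) = phi cs i :=
  cs.lift_apply_simple (phi_liftable cs) i

lemma theta_wordProd (ω : List B) (t : W) (ε : ℤˣ) :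
    theta cs (cs.wordProd ω) (t, ε) =
      (cs.wordProd ω * t * (cs.wordProd ω)⁻¹, ε * signList t (cs.rightInvSeq ω)) := by
  classical
  induction ω generalizing t ε with
  | nil => simp [signList]
  | cons i ω ih =>
    rw [cs.wordProd_cons, map_mul, Equiv.Perm.mul_apply, ih, theta_simple, phi_apply]
    have hris : cs.rightInvSeq (i :: ω)
        = ((cs.wordProd ω)⁻¹ * cs.simple i * cs.wordProd ω) :: cs.rightInvSeq ω := rfl
    rw [hris, signList_cons]
    rw [Prod.mk.injEq]
    constructor
    · rw [mul_inv_rev, cs.inv_simple]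
      group
    · have hcond : (cs.wordProd ω * t * (cs.wordProd ω)⁻¹ = cs.simple i)
          ↔ ((cs.wordProd ω)⁻¹ * cs.simple i * cs.wordProd ω = t) := by
        rw [conj_eq_iff]
        constructor <;> intro h <;> rw [h]
      by_cases h : (cs.wordProd ω)⁻¹ * cs.simple i * cs.wordProd ω = t
      · rw [if_pos (hcond.mpr h), if_pos h]
        simp [mul_comm, mul_left_comm]
      · rw [if_neg (fun hc => h (hcond.mp hc)), if_neg h, one_mul]

lemma theta_apply_eq_conj (w t : W) (ε : ℤˣ) :
    theta cs w (t, ε) = (w * t * w⁻¹, ε * (theta cs w (t, 1)).2) := by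
  obtain ⟨ω, rfl⟩ := cs.wordProd_surjective w
  rw [theta_wordProd, theta_wordProd, one_mul]

/-- For a reflection `t`, the sign of `t` in `theta t` is `-1`. -/
lemma theta_refl_self {t : W} (ht : cs.IsReflection t) :
    theta cs t (t, 1) = (t, -1) := by
  obtain ⟨u, i, rfl⟩ := ht
  set t := u * cs.simple i * u⁻¹ with hts
  have h1 : theta cs u⁻¹ (t, 1) = (cs.simple i, (theta cs u⁻¹ (t, 1)).2) := by
    rw [theta_apply_eq_conj]
    congr 1
    rw [hts]
    group
  set d : ℤˣ := (theta cs u⁻¹ (t, 1)).2 with hd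
  have h2 : theta cs u (cs.simple i, d) = (t, 1) := by
    have : theta cs u (theta cs u⁻¹ (t, 1)) = (t, 1) := by
      rw [← Equiv.Perm.mul_apply, ← map_mul, mul_inv_cancel, map_one, Equiv.Perm.one_apply]
    rw [h1] at this
    exact this
  have h3 : theta cs u (cs.simple i, -d)
      = (u * cs.simple i * u⁻¹, -(d * (theta cs u (cs.simple i, 1)).2)) := by
    rw [theta_apply_eq_conj, neg_mul]
  have h4 : d * (theta cs u (cs.simple i, 1)).2 = 1 := by
    have := h2
    rw [theta_apply_eq_conj] at this
    have := congrArg Prod.snd this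
    simpa using this
  calc theta cs t (t, 1)
      = theta cs u (theta cs (cs.simple i) (theta cs u⁻¹ (t, 1))) := by
        rw [← Equiv.Perm.mul_apply, ← Equiv.Perm.mul_apply, ← map_mul, ← map_mul, hts]
    _ = theta cs u (cs.simple i, -d) := by
        rw [h1, theta_simple, phi_apply, if_pos rfl]
        rw [cs.simple_mul_simple_self, one_mul]
    _ = (t, -1) := by rw [h3, h4, hts]

/-- Strong exchange, membership form: valid for an arbitrary word. -/
lemma mem_rightInvSeq_of_isRightInversion (ω : List B) {t : W}
    (ht : cs.IsReflection t) (hl : cs.length (cs.wordProd ω * t) < cs.length (cs.wordProd ω)) :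
    t ∈ cs.rightInvSeq ω := by
  classical
  by_contra hmem
  have hsign : signList t (cs.rightInvSeq ω) = 1 := signList_eq_one_of_not_mem hmem
  set w := cs.wordProd ω with hw
  obtain ⟨γ, hγred, hγ⟩ := cs.exists_reduced_word' (w * t)
  -- compute the sign of `t` in `theta w` in two ways
  have hA : theta cs w (t, 1) = (w * t * w⁻¹, 1) := by
    rw [hw, theta_wordProd, hsign, one_mul]
  have hB : theta cs w (t, 1)
      = ((w * t) * t * (w * t)⁻¹, -signList t (cs.rightInvSeq γ)) := by
    have hw2 : w = (w * t) * t := by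
      rw [mul_assoc, ht.mul_self, mul_one]
    have ht1 : theta cs t (t, 1) = (t, -1) := theta_refl_self cs ht
    calc theta cs w (t, 1) = theta cs (w * t) (theta cs t (t, 1)) := by
          rw [← Equiv.Perm.mul_apply, ← map_mul, ← hw2]
      _ = theta cs (w * t) (t, -1) := by rw [ht1]
      _ = ((w * t) * t * (w * t)⁻¹, -signList t (cs.rightInvSeq γ)) := by
          rw [hγ, theta_wordProd, neg_mul, one_mul]
  have hsign2 : signList t (cs.rightInvSeq γ) = -1 := by
    have := hA.symm.trans hB
    have := congrArg Prod.snd this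
    simp only at this
    have h2 : -signList t (cs.rightInvSeq γ) = 1 := this.symm
    rwa [neg_eq_iff_eq_neg] at h2
  have hmem2 : t ∈ cs.rightInvSeq γ := by
    by_contra hm
    rw [signList_eq_one_of_not_mem hm] at hsign2
    exact absurd hsign2 (by decide)
  have hinv := cs.isRightInversion_of_mem_rightInvSeq hγred hmem2
  rw [← hγ] at hinv
  rcases hinv with ⟨-, hlen⟩
  rw [mul_assoc, ht.mul_self, mul_one] at hlen
  omega

/-- Strong exchange: deleting a letter. -/
lemma exists_eraseIdx_of_isRightInversion (ω : List B) {t : W}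
    (ht : cs.IsReflection t) (hl : cs.length (cs.wordProd ω * t) < cs.length (cs.wordProd ω)) :
    ∃ j, j < ω.length ∧ cs.wordProd (ω.eraseIdx j) = cs.wordProd ω * t := by
  have hmem := mem_rightInvSeq_of_isRightInversion cs ω ht hl
  obtain ⟨j, hj, hjt⟩ := List.mem_iff_getElem.mp hmem
  refine ⟨j, ?_, ?_⟩
  · have := cs.length_rightInvSeq ω
    omega
  · rw [← cs.wordProd_mul_getD_rightInvSeq ω j]
    congr 1
    rw [List.getD_eq_getElem?_getD, List.getElem?_eq_getElem hj, Option.getD_some, hjt]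

/-- The deletion property: every word contains a reduced word for the same
element as a sublist. -/
lemma exists_reduced_sublist (ω : List B) :
    ∃ σ : List B, σ.Sublist ω ∧ cs.IsReduced σ ∧ cs.wordProd σ = cs.wordProd ω := by
  induction ω with
  | nil => exact ⟨[], by simp, by simp [CoxeterSystem.IsReduced], rfl⟩
  | cons i ω ih =>
    obtain ⟨σ, hsub, hred, hprod⟩ := ih
    rcases cs.length_simple_mul (cs.wordProd σ) i with h | h
    · refine ⟨i :: σ, List.cons_sublist_cons.mpr hsub, ?_, ?_⟩
      · rw [CoxeterSystem.IsReduced, cs.wordProd_cons, h, hred]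
        simp
      · rw [cs.wordProd_cons, cs.wordProd_cons, hprod]
    · -- the word `i :: σ` is not reduced; use strong exchange
      set t := (cs.wordProd σ)⁻¹ * cs.simple i * cs.wordProd σ with hts
      have htr : cs.IsReflection t :=
        ⟨(cs.wordProd σ)⁻¹, i, by rw [hts, inv_inv]⟩
      have hlt : cs.length (cs.wordProd σ * t) < cs.length (cs.wordProd σ) := by
        have : cs.wordProd σ * t = cs.simple i * cs.wordProd σ := by
          rw [hts]; group
        rw [this]; omega
      obtain ⟨j, hj, hje⟩ := exists_eraseIdx_of_isRightInversion cs σ htr hlt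
      refine ⟨σ.eraseIdx j, ?_, ?_, ?_⟩
      · exact (List.eraseIdx_sublist σ j).trans (hsub.trans (List.sublist_cons_self i ω))
      · rw [CoxeterSystem.IsReduced, hje]
        have h1 : cs.wordProd σ * t = cs.simple i * cs.wordProd σ := by
          rw [hts]; group
        rw [h1]
        have h2 : (σ.eraseIdx j).length + 1 = σ.length := List.length_eraseIdx_add_one hj
        rw [CoxeterSystem.IsReduced] at hred
        omega
      · rw [hje, hts, cs.wordProd_cons, hprod]
        group

end StrictAux

namespace StrictAux

variable {B : Type*} {W : Type*} [Group W] {M : CoxeterMatrix B}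
variable (cs : CoxeterSystem M W)

open CoxeterSystem List

/-- One step of the Bruhat order: multiply by a reflection on the right,
increasing length. -/
def BruStep (a b : W) : Prop :=
  ∃ t : W, cs.IsReflection t ∧ b = a * t ∧ cs.length a < cs.length b

/-- The Bruhat order as the reflexive-transitive closure of `BruStep`. -/
def Bru (v w : W) : Prop := Relation.ReflTransGen (BruStep cs) v w

lemma Bru.refl (w : W) : Bru cs w w := Relation.ReflTransGen.refl

/-- Any word representing `w` contains a subword representing anything Bruhat-below
`w`. -/
lemma sublist_of_bru {v w : W} (h : Bru cs v w) :
    ∀ ω : List B, cs.wordProd ω = w → ∃ σ : List B, σ.Sublist ω ∧ cs.wordProd σ = v := by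
  induction h using Relation.ReflTransGen.head_induction_on with
  | refl => exact fun ω hω => ⟨ω, List.Sublist.refl ω, hω⟩
  | head hab _ ih =>
    rename_i a b _
    intro ω hω
    obtain ⟨σb, hsubb, hprodb⟩ := ih ω hω
    obtain ⟨t, htr, hbat, hlen⟩ := hab
    obtain ⟨ρ, hρsub, hρred, hρprod⟩ := exists_reduced_sublist cs σb
    have hρb : cs.wordProd ρ = b := by rw [hρprod, hprodb]
    have hlt : cs.length (cs.wordProd ρ * t) < cs.length (cs.wordProd ρ) := by
      rw [hρb, hbat, mul_assoc, htr.mul_self, mul_one]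
      rw [hbat] at hlen
      exact hlen
    obtain ⟨j, hj, hje⟩ := exists_eraseIdx_of_isRightInversion cs ρ htr hlt
    refine ⟨ρ.eraseIdx j, ((List.eraseIdx_sublist ρ j).trans hρsub).trans hsubb, ?_⟩
    rw [hje, hρb, hbat, mul_assoc, htr.mul_self, mul_one]

lemma rightInvSeq_append (α β : List B) :
    cs.rightInvSeq (α ++ β)
      = (cs.rightInvSeq α).map (fun x => (cs.wordProd β)⁻¹ * x * cs.wordProd β)
        ++ cs.rightInvSeq β := by
  induction α with
  | nil => simp
  | cons a α ihα =>
    show ((cs.wordProd (α ++ β))⁻¹ * cs.simple a * cs.wordProd (α ++ β))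
        :: cs.rightInvSeq (α ++ β) = _
    rw [ihα]
    show _ = ((cs.wordProd β)⁻¹ * ((cs.wordProd α)⁻¹ * cs.simple a * cs.wordProd α)
        * cs.wordProd β) :: _
    rw [cs.wordProd_append]
    congr 1
    group

/-- Key length lemma: if `u s > u` and `s v > v` then `u s v > u v`. -/
lemma length_mul_simple_mul_lt (u v : W) (i : B)
    (hu : cs.length u < cs.length (u * cs.simple i))
    (hv : cs.length v < cs.length (cs.simple i * v)) :
    cs.length (u * v) < cs.length (u * cs.simple i * v) := by
  classical
  set t := v⁻¹ * cs.simple i * v with hts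
  have htr : cs.IsReflection t := ⟨v⁻¹, i, by rw [hts, inv_inv]⟩
  have key : u * v * t = u * cs.simple i * v := by rw [hts]; group
  have hne : cs.length (u * v * t) ≠ cs.length (u * v) := htr.length_mul_left_ne (u * v)
  rcases Nat.lt_or_ge (cs.length (u * v * t)) (cs.length (u * v)) with hlt | hge
  · -- impossible: t would appear in the right inversion sequence of a
    -- concatenation of reduced words for u and v
    exfalso
    obtain ⟨ωu, hωured, hωu⟩ := cs.exists_reduced_word' u
    obtain ⟨ωv, hωvred, hωv⟩ := cs.exists_reduced_word' v
    have hword : cs.wordProd (ωu ++ ωv) = u * v := by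
      rw [cs.wordProd_append, ← hωu, ← hωv]
    have hmem : t ∈ cs.rightInvSeq (ωu ++ ωv) := by
      apply mem_rightInvSeq_of_isRightInversion cs _ htr
      rw [hword]; exact hlt
    rw [rightInvSeq_append, List.mem_append] at hmem
    rcases hmem with hmem | hmem
    · obtain ⟨x, hx, hxt⟩ := List.mem_map.mp hmem
      have hxs : x = cs.simple i := by
        have : (cs.wordProd ωv)⁻¹ * x * cs.wordProd ωv = v⁻¹ * cs.simple i * v := hxt.trans hts
        rw [← hωv] at this
        have := congrArg (fun z => v * z * v⁻¹) this
        simpa [mul_assoc] using this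
      rw [hxs] at hx
      have := cs.isRightInversion_of_mem_rightInvSeq hωured hx
      rcases this with ⟨-, hlen2⟩
      rw [← hωu] at hlen2
      omega
    · have := cs.isRightInversion_of_mem_rightInvSeq hωvred hmem
      rcases this with ⟨-, hlen2⟩
      rw [← hωv] at hlen2
      have : v * t = cs.simple i * v := by rw [hts]; group
      rw [this] at hlen2
      omega
  · rw [← key]
    omega

/-- Convert the chain Bruhat order to the subword Bruhat order. -/
lemma bruhatLE_of_bru {v w : W} (h : Bru cs v w) :
    ∃ ω : List B, cs.IsReduced ω ∧ cs.wordProd ω = w ∧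
      ∃ ω' : List B, ω'.Sublist ω ∧ cs.wordProd ω' = v := by
  obtain ⟨ω, hωred, hω⟩ := cs.exists_reduced_word' w
  obtain ⟨σ, hσsub, hσ⟩ := sublist_of_bru cs h ω hω.symm
  exact ⟨ω, hωred, hω.symm, σ, hσsub, hσ⟩

end StrictAux


namespace StrictAux

variable {B : Type*} {W : Type*} [Group W] {M : CoxeterMatrix B} {Δ : Type*}
variable (cs : CoxeterSystem M W) (d : Δ → Δ → W)

open CoxeterSystem List

section Building

lemma simple_symm (hd1 : WD1 d) (hd2 : WD2 cs d) {D D' : Δ} {i : B} (h : d D D' = cs.simple i) :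
    d D' D = cs.simple i := by
  have h11 : d D' D' = 1 := (hd1 D' D').mpr rfl
  obtain ⟨hdesc, hndesc⟩ := hd2 D' D D' i h
  have key : d D' D * cs.simple i = 1 → d D' D = cs.simple i := by
    intro hk
    have := congrArg (fun z => z * cs.simple i) hk
    simpa [mul_assoc, cs.simple_mul_simple_self] using this
  by_cases hc : cs.IsRightDescent (d D' D) i
  · rcases hdesc hc with h1 | h1
    · exact key (h1 ▸ h11)
    · exfalso
      have hDD : D' = D := (hd1 D' D).mp (h1 ▸ h11)
      subst hDD
      rw [(hd1 D' D').mpr rfl] at h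
      have := cs.length_simple i
      rw [← h] at this
      simp at this
  · exact key ((hndesc hc) ▸ h11)

lemma wg3_building (hd1 : WD1 d) (hd2 : WD2 cs d) (hd3 : WD3 cs d) (C D : Δ) (i : B) :
    ∃ E : Δ, d E D = cs.simple i ∧ d C E = d C D * cs.simple i := by
  obtain ⟨D', h1, h2⟩ := hd3 C D i
  exact ⟨D', simple_symm cs d hd1 hd2 h1, h2⟩

end Building

/-- Galleries of a given type. -/
def IsGallery (cs : CoxeterSystem M W) (d : Δ → Δ → W) : List B → Δ → Δ → Prop
  | [], C, D => C = D
  | i :: ω, C, D => ∃ C₁, d C C₁ = cs.simple i ∧ IsGallery cs d ω C₁ D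

section Building2

lemma isGallery_concat {ω : List B} {C E D : Δ} {i : B}
    (hg : IsGallery cs d ω C E) (hE : d E D = cs.simple i) :
    IsGallery cs d (ω ++ [i]) C D := by
  induction ω generalizing C with
  | nil =>
    obtain rfl : C = E := hg
    exact ⟨D, hE, rfl⟩
  | cons a α ih =>
    obtain ⟨C₁, h1, hg₁⟩ := hg
    exact ⟨C₁, h1, ih hg₁⟩

lemma exists_gallery (hd1 : WD1 d) (hd2 : WD2 cs d) (hd3 : WD3 cs d) : ∀ ω : List B, cs.IsReduced ω → ∀ C D : Δ,
    d C D = cs.wordProd ω → IsGallery cs d ω C D := by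
  intro ω
  induction ω using List.reverseRecOn with
  | nil =>
    intro _ C D h
    rw [cs.wordProd_nil] at h
    exact (hd1 C D).mp h
  | append_singleton α i ih =>
    intro hred C D h
    have hα : cs.IsReduced α := by
      have := hred.take α.length
      rwa [List.take_left] at this
    obtain ⟨D₁, hDD₁, hCD₁⟩ := hd3 C D i
    have hCD₁' : d C D₁ = cs.wordProd α := by
      rw [hCD₁, h, cs.wordProd_append, cs.wordProd_singleton,
        cs.simple_mul_simple_cancel_right]
    have hD₁D : d D₁ D = cs.simple i := simple_symm cs d hd1 hd2 hDD₁
    exact isGallery_concat cs d (ih hα C D₁ hCD₁') hD₁D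

lemma gallery_reverse (hd1 : WD1 d) (hd2 : WD2 cs d) : ∀ ω : List B, cs.IsReduced ω → ∀ C D : Δ,
    IsGallery cs d ω C D → d D C = (cs.wordProd ω)⁻¹ := by
  intro ω
  induction ω with
  | nil =>
    intro _ C D hg
    obtain rfl : C = D := hg
    rw [cs.wordProd_nil, inv_one]
    exact (hd1 C C).mpr rfl
  | cons i ω ih =>
    intro hred C D hg
    obtain ⟨C₁, h1, hg₁⟩ := hg
    have hωred : cs.IsReduced ω := by
      have := hred.drop 1
      simpa using this
    have ihC₁ : d D C₁ = (cs.wordProd ω)⁻¹ := ih hωred C₁ D hg₁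
    have hC₁C : d C₁ C = cs.simple i := simple_symm cs d hd1 hd2 h1
    have hinv : (cs.wordProd ω)⁻¹ * cs.simple i = (cs.wordProd (i :: ω))⁻¹ := by
      rw [cs.wordProd_cons, mul_inv_rev, cs.inv_simple]
    have hnd : ¬ cs.IsRightDescent (d D C₁) i := by
      rw [ihC₁]
      show ¬ (cs.length ((cs.wordProd ω)⁻¹ * cs.simple i) < cs.length (cs.wordProd ω)⁻¹)
      rw [hinv, cs.length_inv, cs.length_inv, hred, hωred]
      simp
    have := (hd2 D C₁ C i hC₁C).2 hnd
    rw [this, ihC₁, hinv]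

lemma dist_symm (hd1 : WD1 d) (hd2 : WD2 cs d) (hd3 : WD3 cs d) (C D : Δ) : d D C = (d C D)⁻¹ := by
  obtain ⟨ω, hωred, hω⟩ := cs.exists_reduced_word' (d C D)
  rw [hω]
  exact gallery_reverse cs d hd1 hd2 ω hωred C D
    (exists_gallery cs d hd1 hd2 hd3 ω hωred C D hω)

lemma bru_triangle (hd1 : WD1 d) (hd2 : WD2 cs d) (hd3 : WD3 cs d) (n : ℕ) : ∀ C D E : Δ, cs.length (d D E) = n →
    Bru cs (d C D * d D E) (d C E) := by
  induction n using Nat.strong_induction_on with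
  | _ n ih =>
  intro C D E hn
  by_cases h1 : d D E = 1
  · obtain rfl : D = E := (hd1 D E).mp h1
    rw [h1, mul_one]
    exact Bru.refl cs (d C D)
  · obtain ⟨i, hdesc⟩ := cs.exists_leftDescent_of_ne_one h1
    have hsymmED : d E D = (d D E)⁻¹ := dist_symm cs d hd1 hd2 hd3 D E
    obtain ⟨D₁, hDD₁, hED₁⟩ := hd3 E D i
    have hED₁' : d E D₁ = (d D E)⁻¹ * cs.simple i := by rw [hED₁, hsymmED]
    have hD₁E : d D₁ E = cs.simple i * d D E := by
      rw [dist_symm cs d hd1 hd2 hd3 E D₁, hED₁', mul_inv_rev, inv_inv, cs.inv_simple]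
    have hlen : cs.length (d D₁ E) < n := by
      rw [hD₁E, ← hn]
      exact hdesc
    have IH := ih (cs.length (d D₁ E)) hlen C D₁ E rfl
    rw [hD₁E] at IH
    obtain ⟨hdesc2, hnodesc2⟩ := hd2 C D D₁ i hDD₁
    have case1 : d C D₁ = d C D * cs.simple i → Bru cs (d C D * d D E) (d C E) := by
      intro hC
      rw [hC, mul_assoc, cs.simple_mul_simple_cancel_left] at IH
      exact IH
    by_cases hc : cs.IsRightDescent (d C D) i
    · rcases hdesc2 hc with hC | hC
      · exact case1 hC
      · rw [hC] at IH
        have hstep : BruStep cs (d C D * d D E) (d C D * (cs.simple i * d D E)) := by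
          refine ⟨(d D E)⁻¹ * cs.simple i * d D E,
            ⟨(d D E)⁻¹, i, by rw [inv_inv]⟩, by group, ?_⟩
          have := length_mul_simple_mul_lt cs (d C D * cs.simple i) (cs.simple i * d D E) i
            (by rw [mul_assoc, cs.simple_mul_simple_self, mul_one]; exact hc)
            (by rw [cs.simple_mul_simple_cancel_left]; exact hdesc)
          rw [mul_assoc, cs.simple_mul_simple_cancel_left, mul_assoc,
            cs.simple_mul_simple_cancel_left] at this
          rwa [← mul_assoc]
        exact Relation.ReflTransGen.head hstep IH
    · exact case1 (hnodesc2 hc)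

end Building2

end StrictAux

/-- Let `(Δ, d)` be a building of type `W`. On the connected simply connected
groupoid with vertex set `Δ` (whose edges are ordered pairs of vertices, with
composition `(C,D)(D,E) = (C,E)`, identities `(C,C)` and inverses `(C,D)⁻¹ = (D,C)`),
the function `δ'(C,D) = d(C,D)` is a strict `W`-groupoid: it is weak and satisfies
(WG1), (WG2), (WG3) and strictness, each expressed here in terms of pairs. -/
theorem stmt10 (cs : CoxeterSystem M W) (d : Δ → Δ → W)
    (hd1 : WD1 d) (hd2 : WD2 cs d) (hd3 : WD3 cs d) :
    -- weakness
    (∀ (C : Δ) (i : B), ∃ D : Δ, d C D = cs.simple i) ∧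
    -- (WG1): identity edges have W-length 1
    (∀ C : Δ, d C C = 1) ∧
    -- (WG2): the triangle inequality for composable edges (C,D), (D,E)
    (∀ C D E : Δ, BruhatLE cs (d C D * d D E) (d C E)) ∧
    -- (WG3): geodesic extension
    (∀ (C D : Δ) (i : B), cs.IsRightDescent (d C D) i →
      ∃ E : Δ, d E D = cs.simple i ∧ d C E = d C D * cs.simple i) ∧
    -- strictness: an edge of W-length 1 is an identity edge
    (∀ C D : Δ, d C D = 1 → C = D) := by
  classical
  refine ⟨?_, ?_, ?_, ?_, ?_⟩
  · intro C i
    obtain ⟨D', h1, h2⟩ := hd3 C C i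
    refine ⟨D', ?_⟩
    rw [h2, (hd1 C C).mpr rfl, one_mul]
  · intro C
    exact (hd1 C C).mpr rfl
  · intro C D E
    exact StrictAux.bruhatLE_of_bru cs
      (StrictAux.bru_triangle cs d hd1 hd2 hd3 (cs.length (d D E)) C D E rfl)
  · intro C D i _
    exact StrictAux.wg3_building cs d hd1 hd2 hd3 C D i
  · intro C D h
    exact (hd1 C D).mp h
end

section
/- Let δ: G → W be a strict W-groupoid on a connected simply connected groupoid G (a groupoid with exactly one edge between each ordered pair of vertices). Define δ': G₀ × G₀ → W by δ'(C,D) = δ(g) where g is the unique edge from C to D. Then (G₀, δ') is a building of type W, i.e., satisfies (WD1), (WD2), (WD3). -/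
open List

variable {B : Type*} {W : Type*} [Group W] {M : CoxeterMatrix B}

variable {Δ : Type*}

lemma BruhatLE.length_le {cs : CoxeterSystem M W} {v w : W} (h : BruhatLE cs v w) :
    cs.length v ≤ cs.length w := by
  obtain ⟨ω, hred, rfl, ω', hsub, rfl⟩ := h
  calc cs.length (cs.wordProd ω') ≤ ω'.length := cs.length_wordProd_le ω'
    _ ≤ ω.length := hsub.length_le
    _ = cs.length (cs.wordProd ω) := hred.symm

lemma BruhatLE.eq_of_length_ge {cs : CoxeterSystem M W} {v w : W} (h : BruhatLE cs v w)
    (hl : cs.length w ≤ cs.length v) : v = w := by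
  obtain ⟨ω, hred, rfl, ω', hsub, rfl⟩ := h
  have h1 : ω'.length ≤ ω.length := hsub.length_le
  have h2 : cs.length (cs.wordProd ω') ≤ ω'.length := cs.length_wordProd_le ω'
  have h3 : cs.length (cs.wordProd ω) = ω.length := hred
  rw [hsub.eq_of_length (le_antisymm h1 (by omega))]

lemma BruhatLE.eq_one {cs : CoxeterSystem M W} {v : W} (h : BruhatLE cs v 1) : v = 1 := by
  have := h.length_le
  rw [cs.length_one, Nat.le_zero] at this
  exact cs.length_eq_zero_iff.mp this

lemma BruhatLE.le_simple {cs : CoxeterSystem M W} {v : W} {i : B}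
    (h : BruhatLE cs v (cs.simple i)) : v = 1 ∨ v = cs.simple i := by
  have hl := h.length_le
  rw [cs.length_simple] at hl
  rcases Nat.le_one_iff_eq_zero_or_eq_one.mp hl with h0 | h1
  · exact Or.inl (cs.length_eq_zero_iff.mp h0)
  · exact Or.inr (h.eq_of_length_ge (by rw [cs.length_simple, h1]))

/-- Let `δ` be a strict `W`-groupoid on a connected simply connected groupoid with
vertex set `Δ`; identifying the unique edge from `C` to `D` with the pair `(C,D)`,
`δ` is a function `d : Δ × Δ → W` which is weak and satisfies (WG1), (WG2), (WG3)
and strictness in pair form. Then `(Δ, d)` is a building of type `W`. -/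
theorem stmt11 (cs : CoxeterSystem M W) (d : Δ → Δ → W)
    (hweak : ∀ (C : Δ) (i : B), ∃ D : Δ, d C D = cs.simple i)
    (h1 : ∀ C : Δ, d C C = 1)
    (h2 : ∀ C D E : Δ, BruhatLE cs (d C D * d D E) (d C E))
    (h3 : ∀ (C D : Δ) (i : B), cs.IsRightDescent (d C D) i →
      ∃ E : Δ, d E D = cs.simple i ∧ d C E = d C D * cs.simple i)
    (hstrict : ∀ C D : Δ, d C D = 1 → C = D) :
    WD1 d ∧ WD2 cs d ∧ WD3 cs d := by
  have hsymm : ∀ C D : Δ, d D C = (d C D)⁻¹ := by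
    intro C D
    have h := h2 C D C
    rw [h1] at h
    exact eq_inv_of_mul_eq_one_right h.eq_one
  have wd2 : WD2 cs d := by
    intro C D D' i hDD'
    have hws : BruhatLE cs (d C D * cs.simple i) (d C D') := by
      have := h2 C D D'; rwa [hDD'] at this
    have hus : BruhatLE cs (d C D' * cs.simple i) (d C D) := by
      have := h2 C D' D
      rwa [hsymm D D', hDD', cs.inv_simple] at this
    constructor
    · -- descent case
      intro hd
      have hd' : cs.length (d C D * cs.simple i) + 1 = cs.length (d C D) :=
        cs.isRightDescent_iff.mp hd
      by_cases hu : cs.IsRightDescent (d C D') i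
      · -- u has descent too
        obtain ⟨E, hED', hCE⟩ := h3 C D' i hu
        have hEDle : BruhatLE cs (d E D * cs.simple i) (cs.simple i) := by
          have := h2 E D D'
          rwa [hDD', hED'] at this
        rcases hEDle.le_simple with hED | hED
        · -- d E D = s i ; so u ≤ w
          have hEDs : d E D = cs.simple i := by
            have := congrArg (· * cs.simple i) hED
            simpa [mul_assoc, cs.simple_mul_simple_self] using this
          have huw : BruhatLE cs (d C D') (d C D) := by
            have := h2 C E D
            rwa [hCE, hEDs, mul_assoc, cs.simple_mul_simple_self, mul_one] at this
          rcases Nat.lt_or_ge (cs.length (d C D')) (cs.length (d C D)) with hlt | hge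
          · left
            have := hws.length_le
            exact (hws.eq_of_length_ge (by omega)).symm
          · exact Or.inr (huw.eq_of_length_ge hge)
        · -- d E D * s = s, so d E D = 1, E = D, hence w = u * s and u = w * s
          left
          have hED1 : d E D = 1 := by
            have := congrArg (· * cs.simple i) hED
            simpa [mul_assoc, cs.simple_mul_simple_self] using this
          have hED2 : E = D := hstrict E D hED1
          rw [hED2] at hCE
          have := congrArg (· * cs.simple i) hCE.symm
          simpa [mul_assoc, cs.simple_mul_simple_self] using this
      · -- u no descent: ℓ(u*s) = ℓ u + 1 ≤ ℓ w, ℓ(w*s) ≤ ℓ u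
        left
        have hu' : cs.length (d C D' * cs.simple i) = cs.length (d C D') + 1 :=
          cs.not_isRightDescent_iff.mp hu
        have l1 := hus.length_le
        have l2 := hws.length_le
        exact (hws.eq_of_length_ge (by omega)).symm
    · -- non-descent case
      intro hnd
      have hnd' : cs.length (d C D * cs.simple i) = cs.length (d C D) + 1 :=
        cs.not_isRightDescent_iff.mp hnd
      have l1 := hws.length_le
      have l2 := hus.length_le
      rcases cs.length_mul_simple (d C D') i with h' | h'
      · exact (hws.eq_of_length_ge (by omega)).symm
      · exact (hws.eq_of_length_ge (by omega)).symm
  refine ⟨?_, wd2, ?_⟩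
  · intro C D
    exact ⟨hstrict C D, fun h => h ▸ h1 C⟩
  · intro C D i
    by_cases hd : cs.IsRightDescent (d C D) i
    · obtain ⟨E, hED, hCE⟩ := h3 C D i hd
      refine ⟨E, ?_, hCE⟩
      rw [hsymm E D, hED, cs.inv_simple]
    · obtain ⟨D', hDD'⟩ := hweak D i
      exact ⟨D', hDD', (wd2 C D D' i hDD').2 hd⟩
end

section
/- Let δ: G → W be a W-groupoid where G is a group (one chamber), let B = {g ∈ G : δ(g) = 1} be its Borel subgroup, and suppose the induced map δ_B: B\G/B → W is a bijection with inverse C: W → B\G/B. If w ∈ W and s ∈ S satisfy ws < w, then C(ws) ⊆ C(w)C(s) (as subsets of G). -/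
open List Pointwise

variable {B : Type*} {W : Type*} [Group W] {M : CoxeterMatrix B}

variable {G : Type*} [Group G]

/-- A `W`-groupoid structure on a group `G` (a `W`-groupoid with one chamber):
a weak function `δ : G → W` satisfying (WG1), (WG2), (WG3). -/
structure IsGroupWGroupoid (cs : CoxeterSystem M W) (δ : G → W) : Prop where
  weak : ∀ i : B, ∃ g : G, δ g = cs.simple i
  wg1 : δ 1 = 1
  wg2 : ∀ g h : G, BruhatLE cs (δ g * δ h) (δ (g * h))
  wg3 : ∀ (g : G) (i : B), cs.IsRightDescent (δ g) i →
    ∃ h : G, δ (h⁻¹ * g) = cs.simple i ∧ δ h = δ g * cs.simple i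

/-- The fiber `C(w) = δ⁻¹(w)`, which is the double coset `B w B` when
`δ_B : B\G/B → W` is a bijection. -/
def Cset (δ : G → W) (w : W) : Set G := {g : G | δ g = w}

/-- `δ_B : B\G/B → W` is a bijection: `δ` is surjective, and any two elements with
the same image lie in the same `(B,B)`-double coset, where `B = δ⁻¹(1)`. -/
def DeltaBBijective (δ : G → W) : Prop :=
  (∀ w : W, ∃ g : G, δ g = w) ∧
  (∀ g h : G, δ g = δ h → ∃ b ∈ Cset δ 1, ∃ b' ∈ Cset δ 1, h = b * g * b')

lemma bruhatLE_length_le (cs : CoxeterSystem M W) {v w : W} (h : BruhatLE cs v w) :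
    cs.length v ≤ cs.length w := by
  obtain ⟨ω, hred, hw, ω', hsub, hv⟩ := h
  calc cs.length v ≤ ω'.length := hv ▸ cs.length_wordProd_le ω'
    _ ≤ ω.length := hsub.length_le
    _ = cs.length w := by rw [← hw]; exact hred.symm

lemma bruhatLE_antisymm (cs : CoxeterSystem M W) {v w : W}
    (h1 : BruhatLE cs v w) (h2 : BruhatLE cs w v) : v = w := by
  have hlen : cs.length v = cs.length w :=
    le_antisymm (bruhatLE_length_le cs h1) (bruhatLE_length_le cs h2)
  obtain ⟨ω, hred, hw, ω', hsub, hv⟩ := h1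
  have hωlen : ω.length = cs.length w := by rw [← hw]; exact hred.symm
  have hv' : cs.length v ≤ ω'.length := hv ▸ cs.length_wordProd_le ω'
  have : ω' = ω := hsub.eq_of_length
    (le_antisymm hsub.length_le (by rw [hωlen, ← hlen]; exact hv'))
  rw [← hv, this, hw]

lemma bruhatLE_one (cs : CoxeterSystem M W) {v : W} (h : BruhatLE cs v 1) : v = 1 := by
  obtain ⟨ω, hred, hw, ω', hsub, hv⟩ := h
  have : ω.length = 0 := by
    have := hred; unfold CoxeterSystem.IsReduced at this
    rw [hw, cs.length_one] at this; omega
  have hω : ω = [] := List.length_eq_zero_iff.mp this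
  have : ω' = [] := List.sublist_nil.mp (hω ▸ hsub)
  rw [← hv, this, cs.wordProd_nil]

lemma delta_inv (cs : CoxeterSystem M W) {δ : G → W} (hwg : IsGroupWGroupoid cs δ)
    (g : G) : δ g⁻¹ = (δ g)⁻¹ := by
  have h := hwg.wg2 g g⁻¹
  rw [mul_inv_cancel, hwg.wg1] at h
  have := bruhatLE_one cs h
  exact eq_inv_of_mul_eq_one_right this

lemma delta_borel_mul (cs : CoxeterSystem M W) {δ : G → W} (hwg : IsGroupWGroupoid cs δ)
    {b : G} (hb : δ b = 1) (x : G) : δ (b * x) = δ x := by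
  have h1 := hwg.wg2 b x
  rw [hb, one_mul] at h1
  have h2 := hwg.wg2 b⁻¹ (b * x)
  rw [delta_inv cs hwg, hb, inv_one, one_mul, inv_mul_cancel_left] at h2
  exact (bruhatLE_antisymm cs h1 h2).symm

lemma delta_mul_borel (cs : CoxeterSystem M W) {δ : G → W} (hwg : IsGroupWGroupoid cs δ)
    {b : G} (hb : δ b = 1) (x : G) : δ (x * b) = δ x := by
  have h1 := hwg.wg2 x b
  rw [hb, mul_one] at h1
  have h2 := hwg.wg2 (x * b) b⁻¹
  rw [delta_inv cs hwg, hb, inv_one, mul_one, mul_inv_cancel_right] at h2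
  exact (bruhatLE_antisymm cs h1 h2).symm

/-- Let `δ : G → W` be a `W`-groupoid with one chamber such that `δ_B` is a
bijection. If `ws < w`, then `C(ws) ⊆ C(w)C(s)`. -/
theorem stmt12 (cs : CoxeterSystem M W) (δ : G → W)
    (hwg : IsGroupWGroupoid cs δ) (hbij : DeltaBBijective δ)
    (w : W) (i : B) (hlt : cs.IsRightDescent w i) :
    Cset δ (w * cs.simple i) ⊆ Cset δ w * Cset δ (cs.simple i) := by
  intro g hg
  obtain ⟨g₀, hg₀⟩ := hbij.1 w
  obtain ⟨h, hk, hh⟩ := hwg.wg3 g₀ i (hg₀ ▸ hlt)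
  rw [hg₀] at hh
  obtain ⟨b, hb, b', hb', hgbb⟩ := hbij.2 h g (by rw [hg, hh])
  have hkinv : δ (h⁻¹ * g₀)⁻¹ = cs.simple i := by
    rw [delta_inv cs hwg, hk, cs.inv_simple]
  have hdecomp : g = (b * g₀) * ((h⁻¹ * g₀)⁻¹ * b') := by
    rw [hgbb]; group
  rw [hdecomp]
  exact Set.mul_mem_mul
    (show δ (b * g₀) = w by rw [delta_borel_mul cs hwg hb, hg₀])
    (show δ ((h⁻¹ * g₀)⁻¹ * b') = cs.simple i by
      rw [delta_mul_borel cs hwg hb', hkinv])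
end
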